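/- arXiv:1811.00492 — 5 statements merged into one kernel-verified Lean document; each statement's English description precedes it below -/
import Mathlib

section
/- (Existence of stationary shock profiles.) Let u₋ ≠ u₊ and v₋ be real numbers, and let V : ℝ → ℝ be locally Lipschitz with V(u₋) = V(u₊) = v₋, and suppose (V(u) − v₋)·(u₋ − u₊) > 0 for every u strictly between u₊ and u₋. Then there exists a continuously differentiable, strictly monotone function u : ℝ → ℝ taking values strictly between u₊ and u₋, satisfying u′(ξ) = v₋ − V(u(ξ)) for all ξ ∈ ℝ, with u(ξ) → u₋ as ξ → −∞ and u(ξ) → u₊ as ξ → +∞. -/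
open Filter Set intervalIntegral

lemma log_int_right (K b x₀ x : ℝ) (hK : 0 < K) (hx₀ : x₀ ≤ x) (hx : x < b) :
    ∫ t in x₀..x, -(K * (b - t))⁻¹
      = K⁻¹ * Real.log (b - x) - K⁻¹ * Real.log (b - x₀) := by
  have huIcc : uIcc x₀ x = Icc x₀ x := uIcc_of_le hx₀
  have hne : ∀ s ∈ uIcc x₀ x, b - s ≠ 0 := by
    intro s hs
    rw [huIcc] at hs
    have : s < b := lt_of_le_of_lt hs.2 hx
    linarith
  have hderiv : ∀ s ∈ uIcc x₀ x,
      HasDerivAt (fun t => K⁻¹ * Real.log (b - t)) (-(K * (b - s))⁻¹) s := by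
    intro s hs
    have h1 : HasDerivAt (fun t : ℝ => b - t) (-1) s := by
      simpa using (hasDerivAt_id s).const_sub b
    have h2 : HasDerivAt (fun t => Real.log (b - t)) ((b - s)⁻¹ * (-1)) s :=
      (Real.hasDerivAt_log (hne s hs)).comp s h1
    have h3 := h2.const_mul K⁻¹
    refine h3.congr_deriv ?_
    rw [mul_inv]
    ring
  have hcont : ContinuousOn (fun s => -(K * (b - s))⁻¹) (uIcc x₀ x) := by
    apply ContinuousOn.neg
    apply ContinuousOn.inv₀
    · fun_prop
    · intro s hs
      exact mul_ne_zero hK.ne' (hne s hs)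
  rw [integral_eq_sub_of_hasDerivAt hderiv hcont.intervalIntegrable]

lemma log_int_left (K a x x₁ : ℝ) (hK : 0 < K) (hx : a < x) (hx₁ : x ≤ x₁) :
    ∫ t in x..x₁, -(K * (t - a))⁻¹
      = K⁻¹ * Real.log (x - a) - K⁻¹ * Real.log (x₁ - a) := by
  have huIcc : uIcc x x₁ = Icc x x₁ := uIcc_of_le hx₁
  have hne : ∀ s ∈ uIcc x x₁, s - a ≠ 0 := by
    intro s hs
    rw [huIcc] at hs
    have : a < s := lt_of_lt_of_le hx hs.1
    linarith
  have hderiv : ∀ s ∈ uIcc x x₁,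
      HasDerivAt (fun t => -(K⁻¹ * Real.log (t - a))) (-(K * (s - a))⁻¹) s := by
    intro s hs
    have h1 : HasDerivAt (fun t : ℝ => t - a) 1 s := by
      simpa using (hasDerivAt_id s).sub_const a
    have h2 : HasDerivAt (fun t => Real.log (t - a)) ((s - a)⁻¹ * 1) s :=
      by have := (Real.hasDerivAt_log (hne s hs)).comp s h1; exact this
    have h3 := (h2.const_mul K⁻¹).neg
    refine h3.congr_deriv ?_
    rw [mul_inv]
    ring
  have hcont : ContinuousOn (fun s => -(K * (s - a))⁻¹) (uIcc x x₁) := by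
    apply ContinuousOn.neg
    apply ContinuousOn.inv₀
    · fun_prop
    · intro s hs
      exact mul_ne_zero hK.ne' (hne s hs)
  rw [integral_eq_sub_of_hasDerivAt hderiv hcont.intervalIntegrable]
  ring

lemma key_shock (a b v : ℝ) (hab : a < b) (V : ℝ → ℝ) (hV : LocallyLipschitz V)
    (hVa : V a = v) (hVb : V b = v) (hsign : ∀ x ∈ Set.Ioo a b, v < V x) :
    ∃ u : ℝ → ℝ, ContDiff ℝ 1 u ∧ StrictAnti u ∧ (∀ ξ, u ξ ∈ Set.Ioo a b) ∧
      (∀ ξ, deriv u ξ = v - V (u ξ)) ∧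
      Tendsto u atBot (nhds b) ∧ Tendsto u atTop (nhds a) := by
  have hVc : Continuous V := hV.continuous
  set g : ℝ → ℝ := fun x => (v - V x)⁻¹ with hgdef
  have hfneg : ∀ x ∈ Set.Ioo a b, v - V x < 0 := fun x hx => sub_neg.2 (hsign x hx)
  have hgneg : ∀ x ∈ Set.Ioo a b, g x < 0 := fun x hx => inv_lt_zero.2 (hfneg x hx)
  have hgat : ∀ x ∈ Set.Ioo a b, ContinuousAt g x := by
    intro x hx
    exact ((continuous_const.sub hVc).continuousAt).inv₀ (hfneg x hx).ne
  have hgcont : ContinuousOn g (Set.Ioo a b) :=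
    fun x hx => (hgat x hx).continuousWithinAt
  have hint : ∀ x ∈ Set.Ioo a b, ∀ y ∈ Set.Ioo a b,
      IntervalIntegrable g MeasureTheory.volume x y := fun x hx y hy =>
    (hgcont.mono (Set.ordConnected_Ioo.uIcc_subset hx hy)).intervalIntegrable
  set c : ℝ := (a + b) / 2 with hcdef
  have hc : c ∈ Set.Ioo a b := ⟨by simp only [hcdef]; linarith, by simp only [hcdef]; linarith⟩
  set φ : ℝ → ℝ := fun x => ∫ t in c..x, g t with hφdef
  have hφderiv : ∀ x ∈ Set.Ioo a b, HasDerivAt φ (g x) x := by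
    intro x hx
    exact integral_hasDerivAt_right (hint c hc x hx)
      (ContinuousAt.stronglyMeasurableAtFilter isOpen_Ioo hgat x hx) (hgat x hx)
  have hφcont : ContinuousOn φ (Set.Ioo a b) :=
    fun x hx => ((hφderiv x hx).continuousAt).continuousWithinAt
  have hφanti : ∀ x ∈ Set.Ioo a b, ∀ y ∈ Set.Ioo a b, x < y → φ y < φ x := by
    intro x hx y hy hxy
    have hsplit : φ x + ∫ t in x..y, g t = φ y :=
      integral_add_adjacent_intervals (hint c hc x hx) (hint x hx y hy)
    have hneg : 0 < ∫ t in x..y, -g t := by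
      apply intervalIntegral.intervalIntegral_pos_of_pos_on ((hint x hx y hy).neg)
      · intro t ht
        have ht' : t ∈ Set.Ioo a b := ⟨hx.1.trans ht.1, ht.2.trans hy.2⟩
        simpa using hgneg t ht'
      · exact hxy
    rw [intervalIntegral.integral_neg] at hneg
    linarith
  -- Lipschitz bound near b
  have hnearb : ∃ x₀ ∈ Set.Ioo a b, ∃ K : ℝ, 0 < K ∧
      ∀ s ∈ Set.Ico x₀ b, g s ≤ -(K * (b - s))⁻¹ := by
    obtain ⟨K, t, ht, hK⟩ := hV b
    obtain ⟨ε, hε, hball⟩ := Metric.mem_nhds_iff.1 ht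
    set K' : ℝ := (K : ℝ) + 1 with hK'def
    have hK'pos : 0 < K' := by positivity
    have hKle : K ≤ (⟨K', hK'pos.le⟩ : NNReal) := by
      exact (NNReal.coe_le_coe (r₁ := K) (r₂ := ⟨K', hK'pos.le⟩)).1
        (by show (K : ℝ) ≤ K'; simp [hK'def])
    have hK' : LipschitzOnWith ⟨K', hK'pos.le⟩ V t := fun x hx y hy =>
      le_trans (hK hx hy) (mul_le_mul_left (ENNReal.coe_le_coe.2 hKle) _)
    refine ⟨max c (b - ε / 2), ⟨lt_max_of_lt_left hc.1, max_lt hc.2 (by linarith)⟩,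
      K', hK'pos, ?_⟩
    intro s hs
    have hsb : s < b := hs.2
    have hs_in : s ∈ Set.Ioo a b := ⟨lt_of_lt_of_le (lt_max_of_lt_left hc.1 : a < _) hs.1, hsb⟩
    have hst : s ∈ t := by
      apply hball
      rw [Metric.mem_ball, Real.dist_eq, abs_of_nonpos (by linarith [hs.2.le])]
      have : b - ε / 2 ≤ s := le_trans (le_max_right _ _) hs.1
      linarith
    have hbt : b ∈ t := hball (Metric.mem_ball_self hε)
    have hdist := hK'.dist_le_mul s hst b hbt
    rw [Real.dist_eq, Real.dist_eq] at hdist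
    have hp : 0 < V s - v := by linarith [hfneg s hs_in]
    have habs : |V s - V b| = V s - v := by rw [hVb, abs_of_pos hp]
    have hq : V s - v ≤ K' * (b - s) := by
      rw [habs] at hdist
      have h2 : |s - b| = b - s := by rw [abs_of_nonpos (by linarith)]; ring
      rw [h2] at hdist
      exact hdist
    have hinv : (K' * (b - s))⁻¹ ≤ (V s - v)⁻¹ := inv_anti₀ hp hq
    have hgs : g s = -((V s - v)⁻¹) := by
      rw [hgdef]; simp only
      rw [show v - V s = -(V s - v) by ring, inv_neg]
    rw [hgs]
    linarith
  -- Lipschitz bound near a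
  have hneara : ∃ x₁ ∈ Set.Ioo a b, ∃ K : ℝ, 0 < K ∧
      ∀ s ∈ Set.Ioc a x₁, g s ≤ -(K * (s - a))⁻¹ := by
    obtain ⟨K, t, ht, hK⟩ := hV a
    obtain ⟨ε, hε, hball⟩ := Metric.mem_nhds_iff.1 ht
    set K' : ℝ := (K : ℝ) + 1 with hK'def
    have hK'pos : 0 < K' := by positivity
    have hKle : K ≤ (⟨K', hK'pos.le⟩ : NNReal) := by
      exact (NNReal.coe_le_coe (r₁ := K) (r₂ := ⟨K', hK'pos.le⟩)).1
        (by show (K : ℝ) ≤ K'; simp [hK'def])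
    have hK' : LipschitzOnWith ⟨K', hK'pos.le⟩ V t := fun x hx y hy =>
      le_trans (hK hx hy) (mul_le_mul_left (ENNReal.coe_le_coe.2 hKle) _)
    refine ⟨min c (a + ε / 2), ⟨lt_min hc.1 (by linarith), min_lt_of_left_lt hc.2⟩,
      K', hK'pos, ?_⟩
    intro s hs
    have hsa : a < s := hs.1
    have hs_in : s ∈ Set.Ioo a b := ⟨hsa, lt_of_le_of_lt hs.2 (min_lt_of_left_lt hc.2)⟩
    have hst : s ∈ t := by
      apply hball
      rw [Metric.mem_ball, Real.dist_eq, abs_of_nonneg (by linarith [hs.1.le])]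
      have : s ≤ a + ε / 2 := le_trans hs.2 (min_le_right _ _)
      linarith
    have hat : a ∈ t := hball (Metric.mem_ball_self hε)
    have hdist := hK'.dist_le_mul s hst a hat
    rw [Real.dist_eq, Real.dist_eq] at hdist
    have hp : 0 < V s - v := by linarith [hfneg s hs_in]
    have habs : |V s - V a| = V s - v := by rw [hVa, abs_of_pos hp]
    have hq : V s - v ≤ K' * (s - a) := by
      rw [habs] at hdist
      have h2 : |s - a| = s - a := by rw [abs_of_nonneg (by linarith)]
      rw [h2] at hdist
      exact hdist
    have hinv : (K' * (s - a))⁻¹ ≤ (V s - v)⁻¹ := inv_anti₀ hp hq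
    have hgs : g s = -((V s - v)⁻¹) := by
      rw [hgdef]; simp only
      rw [show v - V s = -(V s - v) by ring, inv_neg]
    rw [hgs]
    linarith
  -- φ tends to -∞ at b from the left
  have hbot : Tendsto φ (nhdsWithin b (Set.Iio b)) atBot := by
    obtain ⟨x₀, hx₀, K, hKpos, hbd⟩ := hnearb
    have hcmp : Tendsto (fun x => (φ x₀ - K⁻¹ * Real.log (b - x₀)) + K⁻¹ * Real.log (b - x))
        (nhdsWithin b (Set.Iio b)) atBot := by
      apply tendsto_atBot_add_const_left
      rw [tendsto_const_mul_atBot_of_pos (inv_pos.2 hKpos)]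
      apply Real.tendsto_log_nhdsGT_zero.comp
      apply tendsto_nhdsWithin_of_tendsto_nhds_of_eventually_within
      · have h0 : Tendsto (fun x : ℝ => b - x) (nhdsWithin b (Set.Iio b)) (nhds (b - b)) :=
          ((continuous_const.sub continuous_id).tendsto b).mono_left nhdsWithin_le_nhds
        simpa using h0
      · filter_upwards [self_mem_nhdsWithin] with x hx
        simp only [Set.mem_Iio] at hx
        simp only [Set.mem_Ioi]; linarith
    apply tendsto_atBot_mono' _ _ hcmp
    · -- eventual bound
      filter_upwards [Ioo_mem_nhdsLT_of_mem ⟨hx₀.2, le_refl b⟩] with x hx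
      have hx_in : x ∈ Set.Ioo a b := ⟨hx₀.1.trans hx.1, hx.2⟩
      have hsplit : φ x₀ + ∫ t in x₀..x, g t = φ x :=
        integral_add_adjacent_intervals (hint c hc x₀ hx₀) (hint x₀ hx₀ x hx_in)
      have hmono : (∫ t in x₀..x, g t) ≤ ∫ t in x₀..x, -(K * (b - t))⁻¹ := by
        apply intervalIntegral.integral_mono_on hx.1.le (hint x₀ hx₀ x hx_in)
        · apply ContinuousOn.intervalIntegrable
          apply ContinuousOn.neg
          apply ContinuousOn.inv₀
          · fun_prop
          · intro s hs
            rw [uIcc_of_le hx.1.le] at hs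
            have : s < b := lt_of_le_of_lt hs.2 hx.2
            exact mul_ne_zero hKpos.ne' (by linarith)
        · intro s hs
          exact hbd s ⟨hs.1, lt_of_le_of_lt hs.2 hx.2⟩
      rw [log_int_right K b x₀ x hKpos hx.1.le hx.2] at hmono
      linarith
  -- φ tends to +∞ at a from the right
  have htop : Tendsto φ (nhdsWithin a (Set.Ioi a)) atTop := by
    obtain ⟨x₁, hx₁, K, hKpos, hbd⟩ := hneara
    have hcmp : Tendsto (fun x => (φ x₁ + K⁻¹ * Real.log (x₁ - a)) - K⁻¹ * Real.log (x - a))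
        (nhdsWithin a (Set.Ioi a)) atTop := by
      simp only [sub_eq_add_neg]
      apply tendsto_atTop_add_const_left
      apply tendsto_neg_atBot_atTop.comp
      rw [tendsto_const_mul_atBot_of_pos (inv_pos.2 hKpos)]
      apply Real.tendsto_log_nhdsGT_zero.comp
      apply tendsto_nhdsWithin_of_tendsto_nhds_of_eventually_within
      · have h0 : Tendsto (fun x : ℝ => x - a) (nhdsWithin a (Set.Ioi a)) (nhds (a - a)) :=
          ((continuous_id.sub continuous_const).tendsto a).mono_left nhdsWithin_le_nhds
        simpa [sub_eq_add_neg] using h0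
      · filter_upwards [self_mem_nhdsWithin] with x hx
        simp only [Set.mem_Ioi] at hx
        simp only [Set.mem_Ioi]; linarith
    apply tendsto_atTop_mono' _ _ hcmp
    · filter_upwards [Ioo_mem_nhdsGT_of_mem ⟨le_refl a, hx₁.1⟩] with x hx
      have hx_in : x ∈ Set.Ioo a b := ⟨hx.1, hx.2.trans hx₁.2⟩
      have hsplit : φ x + ∫ t in x..x₁, g t = φ x₁ :=
        integral_add_adjacent_intervals (hint c hc x hx_in) (hint x hx_in x₁ hx₁)
      have hmono : (∫ t in x..x₁, g t) ≤ ∫ t in x..x₁, -(K * (t - a))⁻¹ := by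
        apply intervalIntegral.integral_mono_on hx.2.le (hint x hx_in x₁ hx₁)
        · apply ContinuousOn.intervalIntegrable
          apply ContinuousOn.neg
          apply ContinuousOn.inv₀
          · fun_prop
          · intro s hs
            rw [uIcc_of_le hx.2.le] at hs
            have : a < s := lt_of_lt_of_le hx.1 hs.1
            exact mul_ne_zero hKpos.ne' (by linarith)
        · intro s hs
          exact hbd s ⟨lt_of_lt_of_le hx.1 hs.1, hs.2⟩
      rw [log_int_left K a x x₁ hKpos hx.1 hx.2.le] at hmono
      linarith
  -- surjectivity of φ onto ℝ
  have hsurj : ∀ y : ℝ, ∃ x ∈ Set.Ioo a b, φ x = y := by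
    intro y
    have h1 : ∃ x₁ ∈ Set.Ioo a b, y ≤ φ x₁ := by
      have h := (htop.eventually (eventually_ge_atTop y)).and
        ((Ioo_mem_nhdsGT_of_mem ⟨le_refl a, hab⟩ :
          Set.Ioo a b ∈ nhdsWithin a (Set.Ioi a)) :
          ∀ᶠ x in nhdsWithin a (Set.Ioi a), x ∈ Set.Ioo a b)
      obtain ⟨x₁, hy1, hmem⟩ := h.exists
      exact ⟨x₁, hmem, hy1⟩
    have h2 : ∃ x₂ ∈ Set.Ioo a b, φ x₂ ≤ y := by
      have h := (hbot.eventually (eventually_le_atBot y)).and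
        ((Ioo_mem_nhdsLT_of_mem ⟨hab, le_refl b⟩ :
          Set.Ioo a b ∈ nhdsWithin b (Set.Iio b)) :
          ∀ᶠ x in nhdsWithin b (Set.Iio b), x ∈ Set.Ioo a b)
      obtain ⟨x₂, hy2, hmem⟩ := h.exists
      exact ⟨x₂, hmem, hy2⟩
    obtain ⟨x₁, hx₁, hy1⟩ := h1
    obtain ⟨x₂, hx₂, hy2⟩ := h2
    rcases le_or_gt x₁ x₂ with h | h
    · have hsub : Set.Icc x₁ x₂ ⊆ Set.Ioo a b := fun z hz =>
        ⟨lt_of_lt_of_le hx₁.1 hz.1, lt_of_le_of_lt hz.2 hx₂.2⟩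
      have := intermediate_value_Icc' h (hφcont.mono hsub)
      obtain ⟨x, hx, hxy⟩ := this ⟨hy2, hy1⟩
      exact ⟨x, hsub hx, hxy⟩
    · have := hφanti x₂ hx₂ x₁ hx₁ h
      exact ⟨x₁, hx₁, le_antisymm (by linarith) hy1⟩
  -- the inverse function
  set ψ : Set.Ioo a b → ℝ := fun x => -φ x with hψdef
  have hψmono : StrictMono ψ := by
    intro x y hxy
    have hlt := hφanti x x.2 y y.2 (Subtype.coe_lt_coe.2 hxy)
    simp only [hψdef]
    linarith
  have hψsurj : Function.Surjective ψ := by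
    intro y
    obtain ⟨x, hx, hxy⟩ := hsurj (-y)
    exact ⟨⟨x, hx⟩, by simp [hψdef, hxy]⟩
  set e := StrictMono.orderIsoOfSurjective ψ hψmono hψsurj with hedef
  set u : ℝ → ℝ := fun ξ => ((e.symm (-ξ) : Set.Ioo a b) : ℝ) with hudef
  have humem : ∀ ξ, u ξ ∈ Set.Ioo a b := fun ξ => (e.symm (-ξ)).2
  have hucont : Continuous u :=
    continuous_subtype_val.comp (e.symm.continuous.comp continuous_neg)
  have huφ : ∀ ξ, φ (u ξ) = ξ := by
    intro ξ
    have h1 : ψ (e.symm (-ξ)) = -ξ := by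
      have := e.apply_symm_apply (-ξ)
      rwa [hedef, StrictMono.coe_orderIsoOfSurjective] at this
    simp only [hψdef] at h1
    exact neg_inj.mp h1
  have hustrict : StrictAnti u := by
    intro ξ η hξη
    have h1 : e.symm (-η) < e.symm (-ξ) := e.symm.strictMono (by linarith : -η < -ξ)
    exact Subtype.coe_lt_coe.2 h1
  have huderiv : ∀ ξ, HasDerivAt u (v - V (u ξ)) ξ := by
    intro ξ
    have h1 : HasDerivAt φ (g (u ξ)) (u ξ) := hφderiv _ (humem ξ)
    have h2 : g (u ξ) ≠ 0 := (hgneg _ (humem ξ)).ne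
    have h3 : HasDerivAt u (g (u ξ))⁻¹ ξ :=
      HasDerivAt.of_local_left_inverse hucont.continuousAt h1 h2
        (Eventually.of_forall huφ)
    have h4 : (g (u ξ))⁻¹ = v - V (u ξ) := by rw [hgdef]; simp
    rwa [h4] at h3
  have hderiv_eq : deriv u = fun ξ => v - V (u ξ) := funext fun ξ => (huderiv ξ).deriv
  have hcontdiff : ContDiff ℝ 1 u := by
    rw [contDiff_one_iff_deriv]
    refine ⟨fun ξ => (huderiv ξ).differentiableAt, ?_⟩
    rw [hderiv_eq]
    exact continuous_const.sub (hVc.comp hucont)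
  have hrange : Set.range u = Set.Ioo a b := by
    apply Set.Subset.antisymm
    · rintro _ ⟨ξ, rfl⟩
      exact humem ξ
    · intro x hx
      refine ⟨-(e ⟨x, hx⟩), ?_⟩
      rw [hudef]
      simp
  have hbddb : BddBelow (Set.range u) := by rw [hrange]; exact bddBelow_Ioo
  have hbdda : BddAbove (Set.range u) := by rw [hrange]; exact bddAbove_Ioo
  have hatTop : Tendsto u atTop (nhds a) := by
    have h1 := tendsto_atTop_ciInf hustrict.antitone hbddb
    have h2 : (⨅ ξ, u ξ) = a := by
      rw [show (⨅ ξ, u ξ) = sInf (Set.range u) from rfl, hrange]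
      exact csInf_Ioo hab
    rwa [h2] at h1
  have hatBot : Tendsto u atBot (nhds b) := by
    have h1 := tendsto_atBot_ciSup hustrict.antitone hbdda
    have h2 : (⨆ ξ, u ξ) = b := by
      rw [show (⨆ ξ, u ξ) = sSup (Set.range u) from rfl, hrange]
      exact csSup_Ioo hab
    rwa [h2] at h1
  exact ⟨u, hcontdiff, hustrict, humem, fun ξ => (huderiv ξ).deriv, hatBot, hatTop⟩

lemma lip_const_sub (C : ℝ) : LipschitzWith 1 (fun y : ℝ => C - y) :=
  LipschitzWith.of_dist_le_mul fun x y => by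
    rw [Real.dist_eq, Real.dist_eq]
    simp only [NNReal.coe_one, one_mul]
    rw [show C - x - (C - y) = -(x - y) by ring, abs_neg]

/-- Existence of stationary shock profiles: a strictly monotone heteroclinic
solution of `u' = v_minus − V(u)` joining `u_minus` (at `ξ = −∞`) to `u_plus`
(at `ξ = +∞`), provided `V(u) − v_minus` has the sign of `u_minus − u_plus`
strictly between the two states. -/
theorem exists_stationary_shock_profile
    (u_minus u_plus v_minus : ℝ) (hne : u_minus ≠ u_plus)
    (V : ℝ → ℝ) (hV : LocallyLipschitz V)
    (hVm : V u_minus = v_minus) (hVp : V u_plus = v_minus)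
    (hsign : ∀ u : ℝ, u ∈ Set.Ioo (min u_plus u_minus) (max u_plus u_minus) →
      (V u - v_minus) * (u_minus - u_plus) > 0) :
    ∃ u : ℝ → ℝ, ContDiff ℝ 1 u ∧ (StrictMono u ∨ StrictAnti u) ∧
      (∀ ξ : ℝ, u ξ ∈ Set.Ioo (min u_plus u_minus) (max u_plus u_minus)) ∧
      (∀ ξ : ℝ, deriv u ξ = v_minus - V (u ξ)) ∧
      Tendsto u atBot (nhds u_minus) ∧
      Tendsto u atTop (nhds u_plus) := by
  rcases lt_or_gt_of_ne hne.symm with h | h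
  · -- u_plus < u_minus : decreasing case, apply key lemma directly
    have hmin : min u_plus u_minus = u_plus := min_eq_left h.le
    have hmax : max u_plus u_minus = u_minus := max_eq_right h.le
    rw [hmin, hmax] at hsign ⊢
    have hsign' : ∀ x ∈ Set.Ioo u_plus u_minus, v_minus < V x := by
      intro x hx
      have := hsign x hx
      nlinarith
    obtain ⟨u, hcd, hanti, hmem, hderiv, hbot, htop⟩ :=
      key_shock u_plus u_minus v_minus h V hV hVp hVm hsign'
    exact ⟨u, hcd, Or.inr hanti, hmem, hderiv, hbot, htop⟩
  · -- u_minus < u_plus : reflect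
    have hmin : min u_plus u_minus = u_minus := min_eq_right h.le
    have hmax : max u_plus u_minus = u_plus := max_eq_left h.le
    rw [hmin, hmax] at hsign ⊢
    set W : ℝ → ℝ := fun x => 2 * v_minus - V (u_minus + u_plus - x) with hWdef
    have hWlip : LocallyLipschitz W := by
      have l1 : LipschitzWith 1 (fun y : ℝ => 2 * v_minus - y) :=
        lip_const_sub (2 * v_minus)
      have l2 : LipschitzWith 1 (fun x : ℝ => u_minus + u_plus - x) :=
        lip_const_sub (u_minus + u_plus)
      exact (l1.locallyLipschitz).comp (hV.comp l2.locallyLipschitz)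
    have hWa : W u_minus = v_minus := by
      simp only [hWdef, show u_minus + u_plus - u_minus = u_plus by ring, hVp]; ring
    have hWb : W u_plus = v_minus := by
      simp only [hWdef, show u_minus + u_plus - u_plus = u_minus by ring, hVm]; ring
    have hWsign : ∀ x ∈ Set.Ioo u_minus u_plus, v_minus < W x := by
      intro x hx
      have hσ : u_minus + u_plus - x ∈ Set.Ioo u_minus u_plus :=
        ⟨by linarith [hx.2], by linarith [hx.1]⟩
      have := hsign _ hσ
      simp only [hWdef]
      nlinarith
    obtain ⟨w, hcd, hanti, hmem, hderivw, hbot, htop⟩ :=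
      key_shock u_minus u_plus v_minus h W hWlip hWa hWb hWsign
    refine ⟨fun ξ => u_minus + u_plus - w ξ, contDiff_const.sub hcd, ?_, ?_, ?_, ?_, ?_⟩
    · left
      intro ξ η hξη
      have := hanti hξη
      simp only
      linarith
    · intro ξ
      have h2 := hmem ξ
      constructor
      · show u_minus < u_minus + u_plus - w ξ
        linarith [h2.2]
      · show u_minus + u_plus - w ξ < u_plus
        linarith [h2.1]
    · intro ξ
      have hd : deriv (fun ξ => u_minus + u_plus - w ξ) ξ = -deriv w ξ := by
        rw [deriv_const_sub]
      rw [hd, hderivw ξ]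
      simp only [hWdef]
      ring_nf
    · have h1 : Tendsto (fun ξ => u_minus + u_plus - w ξ) atBot
          (nhds (u_minus + u_plus - u_plus)) := tendsto_const_nhds.sub hbot
      simpa using h1
    · have h1 : Tendsto (fun ξ => u_minus + u_plus - w ξ) atTop
          (nhds (u_minus + u_plus - u_minus)) := tendsto_const_nhds.sub htop
      simpa using h1
end

section
/- (Scanning-to-deceleration shock profile; Theorem 4.4.) Let u₊ < u₋ be real numbers, let w : ℝ → ℝ be locally Lipschitz, set v₋ := w(u₋), v₊ := w(u₊), and s := −(v₊ − v₋)/(u₊ − u₋). Assume the chord condition: for every u ∈ (u₊, u₋), (v₊ − v₋)/(u₊ − u₋) > (w(u) − v₋)/(u − u₋). Then there exists a continuously differentiable, strictly decreasing function u : ℝ → ℝ with values in (u₊, u₋), satisfying u′(ξ) = −s·(u(ξ) − u₋) − (w(u(ξ)) − v₋) for all ξ ∈ ℝ, with u(ξ) → u₋ as ξ → −∞ and u(ξ) → u₊ as ξ → +∞. -/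
open Filter MeasureTheory intervalIntegral Set

/-- Scanning-to-deceleration shock profile (Theorem 4.4): under the chord
condition, there is a strictly decreasing viscous profile joining
`u_minus` (at `ξ = −∞`) to `u_plus` (at `ξ = +∞`) for the traveling-wave
equation `u' = −s(u − u_minus) − (w(u) − v_minus)` with Rankine–Hugoniot
speed `s = −(v_plus − v_minus)/(u_plus − u_minus)`. -/
theorem exists_scanning_to_deceleration_shock_profile
    (u_plus u_minus : ℝ) (hlt : u_plus < u_minus)
    (w : ℝ → ℝ) (hw : LocallyLipschitz w)
    (v_minus v_plus s : ℝ)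
    (hvm : v_minus = w u_minus) (hvp : v_plus = w u_plus)
    (hs : s = -((v_plus - v_minus) / (u_plus - u_minus)))
    (hchord : ∀ u ∈ Set.Ioo u_plus u_minus,
      (v_plus - v_minus) / (u_plus - u_minus) > (w u - v_minus) / (u - u_minus)) :
    ∃ u : ℝ → ℝ, ContDiff ℝ 1 u ∧ StrictAnti u ∧
      (∀ ξ : ℝ, u ξ ∈ Set.Ioo u_plus u_minus) ∧
      (∀ ξ : ℝ, deriv u ξ = -s * (u ξ - u_minus) - (w (u ξ) - v_minus)) ∧
      Tendsto u atBot (nhds u_minus) ∧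
      Tendsto u atTop (nhds u_plus) := by
  have hwc : Continuous w := hw.continuous
  set S : Set ℝ := Set.Ioo u_plus u_minus with hSdef
  have hSord : S.OrdConnected := Set.ordConnected_Ioo
  set r : ℝ := (v_plus - v_minus) / (u_plus - u_minus) with hr
  set F : ℝ → ℝ := fun x => -s * (x - u_minus) - (w x - v_minus) with hFdef
  have hFcont : Continuous F :=
    ((continuous_const.mul (continuous_id.sub continuous_const)).sub
      (hwc.sub continuous_const))
  have hFr : ∀ x, F x = r * (x - u_minus) - (w x - v_minus) := by
    intro x; simp only [hFdef, hs]; ring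
  have hFneg : ∀ x ∈ S, F x < 0 := by
    intro x hx
    have hxb : x - u_minus < 0 := sub_neg.mpr hx.2
    have h := hchord x hx
    have h2 : r * (x - u_minus) < w x - v_minus := (div_lt_iff_of_neg hxb).mp h
    rw [hFr x]; linarith
  have hFne : ∀ x ∈ S, F x ≠ 0 := fun x hx => (hFneg x hx).ne
  set c : ℝ := (u_plus + u_minus) / 2 with hc
  have hcS : c ∈ S := ⟨by simp only [hc]; linarith, by simp only [hc]; linarith⟩
  have hIcont : ContinuousOn (fun t => (F t)⁻¹) S :=
    ContinuousOn.inv₀ hFcont.continuousOn hFne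
  have hint : ∀ x ∈ S, ∀ y ∈ S, IntervalIntegrable (fun t => (F t)⁻¹) volume x y := by
    intro x hx y hy
    exact (hIcont.mono (hSord.uIcc_subset hx hy)).intervalIntegrable
  set g : ℝ → ℝ := fun x => ∫ t in c..x, (F t)⁻¹ with hgdef
  have hgd : ∀ x ∈ S, HasDerivAt g (F x)⁻¹ x := by
    intro x hx
    exact intervalIntegral.integral_hasDerivAt_right (hint c hcS x hx)
      ⟨Set.univ, Filter.univ_mem, (hFcont.measurable.inv).aestronglyMeasurable⟩
      ((hFcont.continuousAt).inv₀ (hFne x hx))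
  have hganti : StrictAntiOn g S := by
    apply strictAntiOn_of_deriv_neg (convex_Ioo _ _)
    · exact fun x hx => (hgd x hx).continuousAt.continuousWithinAt
    · intro x hx
      rw [interior_Ioo] at hx
      rw [(hgd x hx).deriv]
      exact inv_lt_zero.mpr (hFneg x hx)
  have hrmul : r * (u_plus - u_minus) = v_plus - v_minus :=
    div_mul_cancel₀ _ (sub_ne_zero.mpr hlt.ne)
  -- divergence to -∞ near u_minus
  have hdivb : ∀ M : ℝ, ∃ x ∈ S, g x < M := by
    obtain ⟨K, t, htmem, hK⟩ := hw u_minus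
    obtain ⟨ε, hε, hball⟩ := Metric.mem_nhds_iff.mp htmem
    set L : ℝ := |r| + K + 1 with hLdef
    have hL : 0 < L := by positivity
    set d : ℝ := max c (u_minus - ε / 2) with hd
    have hdS : d ∈ S := ⟨lt_of_lt_of_le hcS.1 (le_max_left _ _),
      max_lt hcS.2 (by linarith)⟩
    have hdb : u_minus - ε < d := lt_of_lt_of_le (by linarith) (le_max_right _ _)
    have hFlow : ∀ x, d ≤ x → x < u_minus → -(L * (u_minus - x)) ≤ F x := by
      intro x h1 h2
      have hxball : x ∈ Metric.ball u_minus ε := by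
        rw [Metric.mem_ball, Real.dist_eq, abs_of_nonpos (by linarith)]
        linarith
      have hdist := hK.dist_le_mul x (hball hxball) u_minus
        (hball (Metric.mem_ball_self hε))
      rw [Real.dist_eq, Real.dist_eq,
        abs_of_nonpos (by linarith : x - u_minus ≤ 0)] at hdist
      obtain ⟨hb1, hb2⟩ := abs_le.mp hdist
      rw [hFr x, hvm]
      simp only [hLdef]
      have h3 : -(|r| * (u_minus - x)) ≤ r * (x - u_minus) := by
        have := neg_abs_le (r * (x - u_minus))
        rwa [abs_mul, abs_of_nonpos (by linarith : x - u_minus ≤ 0), neg_sub] at this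
      nlinarith [K.coe_nonneg]
    have hinv : ∀ x, d ≤ x → x < u_minus → (F x)⁻¹ ≤ (-(L * (u_minus - x)))⁻¹ := by
      intro x h1 h2
      have hxS : x ∈ S := ⟨lt_of_lt_of_le hdS.1 h1, h2⟩
      have hb : -(L * (u_minus - x)) < 0 := by
        have : 0 < L * (u_minus - x) := mul_pos hL (by linarith)
        linarith
      exact (inv_le_inv_of_neg (hFneg x hxS) hb).mpr (hFlow x h1 h2)
    have key : ∀ x, d < x → x < u_minus →
        g x ≤ g d + (L⁻¹ * Real.log (u_minus - x) - L⁻¹ * Real.log (u_minus - d)) := by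
      intro x h1 h2
      have hxS : x ∈ S := ⟨lt_trans hdS.1 h1, h2⟩
      have hsplit : g d + ∫ τ in d..x, (F τ)⁻¹ = g x :=
        integral_add_adjacent_intervals (hint c hcS d hdS) (hint d hdS x hxS)
      have hintbound : IntervalIntegrable (fun τ => (-(L * (u_minus - τ)))⁻¹) volume d x := by
        apply ContinuousOn.intervalIntegrable
        apply ContinuousOn.inv₀
        · exact ((continuous_const.mul (continuous_const.sub continuous_id)).neg).continuousOn
        · intro τ hτ
          rw [uIcc_of_le h1.le] at hτ
          have : 0 < L * (u_minus - τ) := mul_pos hL (by linarith [hτ.2])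
          exact ne_of_lt (by linarith)
      have hmono : (∫ τ in d..x, (F τ)⁻¹) ≤ ∫ τ in d..x, (-(L * (u_minus - τ)))⁻¹ := by
        apply intervalIntegral.integral_mono_on h1.le (hint d hdS x hxS) hintbound
        intro τ hτ
        exact hinv τ hτ.1 (lt_of_le_of_lt hτ.2 h2)
      have hcalc : (∫ τ in d..x, (-(L * (u_minus - τ)))⁻¹)
          = L⁻¹ * Real.log (u_minus - x) - L⁻¹ * Real.log (u_minus - d) := by
        apply intervalIntegral.integral_eq_sub_of_hasDerivAt _ hintbound
        intro τ hτ
        rw [uIcc_of_le h1.le] at hτ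
        have htu : (0:ℝ) < u_minus - τ := by linarith [hτ.2]
        have h0 : HasDerivAt (fun y : ℝ => u_minus - y) (-1) τ :=
          (hasDerivAt_id τ).const_sub u_minus
        have h1' := (h0.log (ne_of_gt htu)).const_mul (L⁻¹)
        have hLne : L ≠ 0 := hL.ne'
        have htu' : u_minus - τ ≠ 0 := htu.ne'
        convert h1' using 1
        · rfl
        · rw [inv_neg, mul_inv]; ring
      rw [← hsplit]
      linarith [hmono.trans (le_of_eq hcalc)]
    intro M
    set C : ℝ := L * (M - g d) + Real.log (u_minus - d) with hC
    set m : ℝ := min (Real.exp C / 2) ((u_minus - d) / 2) with hm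
    have hm0 : 0 < m := lt_min (by positivity) (by linarith [hdS.2])
    set x : ℝ := u_minus - m with hxdef
    have hux : u_minus - x = m := by rw [hxdef]; ring
    have hx1 : d < x := by
      have : m < u_minus - d := lt_of_le_of_lt (min_le_right _ _) (by linarith [hdS.2])
      rw [hxdef]; linarith
    have hx2 : x < u_minus := by rw [hxdef]; linarith
    have hxS : x ∈ S := ⟨lt_trans hdS.1 hx1, hx2⟩
    have hlogm : Real.log m < C := by
      rw [Real.log_lt_iff_lt_exp hm0]
      calc m ≤ Real.exp C / 2 := min_le_left _ _
        _ < Real.exp C := by linarith [Real.exp_pos C]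
    have hkey := key x hx1 hx2
    rw [hux] at hkey
    have h5 : Real.log m - Real.log (u_minus - d) < L * (M - g d) := by
      rw [hC] at hlogm; linarith
    have h6 := mul_lt_mul_of_pos_left h5 (inv_pos.mpr hL)
    rw [← mul_assoc, inv_mul_cancel₀ hL.ne', one_mul] at h6
    refine ⟨x, hxS, ?_⟩
    rw [mul_sub] at h6
    linarith
  -- divergence to +∞ near u_plus
  have hdiva : ∀ M : ℝ, ∃ x ∈ S, M < g x := by
    have hFr' : ∀ x, F x = r * (x - u_plus) - (w x - w u_plus) := by
      intro x
      rw [hFr, ← hvp]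
      linear_combination hrmul
    obtain ⟨K, t, htmem, hK⟩ := hw u_plus
    obtain ⟨ε, hε, hball⟩ := Metric.mem_nhds_iff.mp htmem
    set L : ℝ := |r| + K + 1 with hLdef
    have hL : 0 < L := by positivity
    set d : ℝ := min c (u_plus + ε / 2) with hd
    have hdS : d ∈ S := ⟨lt_min hcS.1 (by linarith),
      lt_of_le_of_lt (min_le_left _ _) hcS.2⟩
    have hdb : d < u_plus + ε := lt_of_le_of_lt (min_le_right _ _) (by linarith)
    have hFlow : ∀ x, u_plus < x → x ≤ d → -(L * (x - u_plus)) ≤ F x := by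
      intro x h1 h2
      have hxball : x ∈ Metric.ball u_plus ε := by
        rw [Metric.mem_ball, Real.dist_eq, abs_of_nonneg (by linarith)]
        linarith
      have hdist := hK.dist_le_mul x (hball hxball) u_plus
        (hball (Metric.mem_ball_self hε))
      rw [Real.dist_eq, Real.dist_eq,
        abs_of_nonneg (by linarith : (0:ℝ) ≤ x - u_plus)] at hdist
      obtain ⟨hb1, hb2⟩ := abs_le.mp hdist
      rw [hFr' x]
      simp only [hLdef]
      have h3 : -(|r| * (x - u_plus)) ≤ r * (x - u_plus) := by
        have := neg_abs_le (r * (x - u_plus))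
        rwa [abs_mul, abs_of_nonneg (by linarith : (0:ℝ) ≤ x - u_plus)] at this
      nlinarith [K.coe_nonneg]
    have hinv : ∀ x, u_plus < x → x ≤ d → (F x)⁻¹ ≤ (-(L * (x - u_plus)))⁻¹ := by
      intro x h1 h2
      have hxS : x ∈ S := ⟨h1, lt_of_le_of_lt h2 hdS.2⟩
      have hb : -(L * (x - u_plus)) < 0 := by
        have : 0 < L * (x - u_plus) := mul_pos hL (by linarith)
        linarith
      exact (inv_le_inv_of_neg (hFneg x hxS) hb).mpr (hFlow x h1 h2)
    have key : ∀ x, u_plus < x → x < d →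
        g d + (L⁻¹ * Real.log (d - u_plus) - L⁻¹ * Real.log (x - u_plus)) ≤ g x := by
      intro x h1 h2
      have hxS : x ∈ S := ⟨h1, lt_trans h2 hdS.2⟩
      have hsplit : g x + ∫ τ in x..d, (F τ)⁻¹ = g d :=
        integral_add_adjacent_intervals (hint c hcS x hxS) (hint x hxS d hdS)
      have hintbound : IntervalIntegrable (fun τ => (-(L * (τ - u_plus)))⁻¹) volume x d := by
        apply ContinuousOn.intervalIntegrable
        apply ContinuousOn.inv₀
        · exact ((continuous_const.mul (continuous_id.sub continuous_const)).neg).continuousOn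
        · intro τ hτ
          rw [uIcc_of_le h2.le] at hτ
          have : 0 < L * (τ - u_plus) := mul_pos hL (by linarith [hτ.1])
          exact ne_of_lt (by linarith)
      have hmono : (∫ τ in x..d, (F τ)⁻¹) ≤ ∫ τ in x..d, (-(L * (τ - u_plus)))⁻¹ := by
        apply intervalIntegral.integral_mono_on h2.le (hint x hxS d hdS) hintbound
        intro τ hτ
        exact hinv τ (lt_of_lt_of_le h1 hτ.1) hτ.2
      have hcalc : (∫ τ in x..d, (-(L * (τ - u_plus)))⁻¹)
          = -(L⁻¹ * Real.log (d - u_plus)) - -(L⁻¹ * Real.log (x - u_plus)) := by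
        refine intervalIntegral.integral_eq_sub_of_hasDerivAt
          (f := fun y => -(L⁻¹ * Real.log (y - u_plus))) ?_ hintbound
        intro τ hτ
        rw [uIcc_of_le h2.le] at hτ
        have htu : (0:ℝ) < τ - u_plus := by linarith [hτ.1]
        have h0 : HasDerivAt (fun y : ℝ => y - u_plus) 1 τ :=
          (hasDerivAt_id τ).sub_const u_plus
        have h1' := ((h0.log (ne_of_gt htu)).const_mul (L⁻¹)).neg
        have hLne : L ≠ 0 := hL.ne'
        have htu' : τ - u_plus ≠ 0 := htu.ne'
        convert h1' using 1
        · rfl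
        · rw [inv_neg, mul_inv]; ring
      linarith [hmono.trans (le_of_eq hcalc)]
    intro M
    set C : ℝ := Real.log (d - u_plus) - L * (M - g d) with hC
    set m : ℝ := min (Real.exp C / 2) ((d - u_plus) / 2) with hm
    have hm0 : 0 < m := lt_min (by positivity) (by linarith [hdS.1])
    set x : ℝ := u_plus + m with hxdef
    have hux : x - u_plus = m := by rw [hxdef]; ring
    have hx2 : x < d := by
      have : m < d - u_plus := lt_of_le_of_lt (min_le_right _ _) (by linarith [hdS.1])
      rw [hxdef]; linarith
    have hx1 : u_plus < x := by rw [hxdef]; linarith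
    have hxS : x ∈ S := ⟨hx1, lt_trans hx2 hdS.2⟩
    have hlogm : Real.log m < C := by
      rw [Real.log_lt_iff_lt_exp hm0]
      calc m ≤ Real.exp C / 2 := min_le_left _ _
        _ < Real.exp C := by linarith [Real.exp_pos C]
    have hkey := key x hx1 hx2
    rw [hux] at hkey
    have h5 : Real.log (d - u_plus) - Real.log m > L * (M - g d) := by
      rw [hC] at hlogm; linarith
    have h6 := mul_lt_mul_of_pos_left h5 (inv_pos.mpr hL)
    rw [← mul_assoc, inv_mul_cancel₀ hL.ne', one_mul] at h6
    refine ⟨x, hxS, ?_⟩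
    rw [mul_sub] at h6
    linarith
  have hsurj : ∀ ξ : ℝ, ∃ y, y ∈ S ∧ g y = ξ := by
    intro ξ
    obtain ⟨x₂, hx₂S, hx₂⟩ := hdivb ξ
    obtain ⟨x₁, hx₁S, hx₁⟩ := hdiva ξ
    have h12 : x₁ < x₂ := by
      by_contra h
      push_neg at h
      rcases lt_or_eq_of_le h with h | h
      · exact absurd (hganti hx₂S hx₁S h) (by linarith)
      · rw [h] at hx₂; linarith
    have hIccS : Set.Icc x₁ x₂ ⊆ S := hSord.out hx₁S hx₂S
    have := intermediate_value_Icc' h12.le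
      ((fun x hx => (hgd x (hIccS hx)).continuousAt.continuousWithinAt) :
        ContinuousOn g (Set.Icc x₁ x₂))
    obtain ⟨y, hy, hgy⟩ := this ⟨hx₂.le, hx₁.le⟩
    exact ⟨y, hIccS hy, hgy⟩
  choose p hpS hpg using hsurj
  have hleftinv : ∀ y ∈ S, p (g y) = y := by
    intro y hy
    exact hganti.injOn (hpS (g y)) hy (hpg (g y))
  have hA : ∀ d ∈ S, ∀ η, g d < η → p η < d := by
    intro d hd η h
    by_contra hcon
    push_neg at hcon
    have := hganti.antitoneOn hd (hpS η) hcon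
    rw [hpg η] at this; linarith
  have hB : ∀ d ∈ S, ∀ η, η < g d → d < p η := by
    intro d hd η h
    by_contra hcon
    push_neg at hcon
    have := hganti.antitoneOn (hpS η) hd hcon
    rw [hpg η] at this; linarith
  have hpanti : StrictAnti p := by
    intro ξ η h
    have hd := hpS ξ
    exact hA (p ξ) hd η (by rw [hpg ξ]; exact h)
  have hpcont : Continuous p := by
    rw [continuous_iff_continuousAt]
    intro ξ
    rw [ContinuousAt, tendsto_order]
    constructor
    · intro d hd
      by_cases hdS : u_plus < d
      · have hdS' : d ∈ S := ⟨hdS, lt_trans hd (hpS ξ).2⟩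
        have h1 : ξ < g d := by
          have := hganti hdS' (hpS ξ) hd
          rw [hpg ξ] at this; exact this
        filter_upwards [eventually_lt_nhds h1] with η hη
        exact hB d hdS' η hη
      · push_neg at hdS
        filter_upwards with η
        exact lt_of_le_of_lt hdS (hpS η).1
    · intro d hd
      by_cases hdS : d < u_minus
      · have hdS' : d ∈ S := ⟨lt_trans (hpS ξ).1 hd, hdS⟩
        have h1 : g d < ξ := by
          have := hganti (hpS ξ) hdS' hd
          rw [hpg ξ] at this; exact this
        filter_upwards [eventually_gt_nhds h1] with η hη
        exact hA d hdS' η hη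
      · push_neg at hdS
        filter_upwards with η
        exact lt_of_lt_of_le (hpS η).2 hdS
  have hpd : ∀ ξ, HasDerivAt p (F (p ξ)) ξ := by
    intro ξ
    have h := HasDerivAt.of_local_left_inverse (hpcont.continuousAt)
      (hgd (p ξ) (hpS ξ)) (inv_ne_zero (hFne (p ξ) (hpS ξ)))
      (Eventually.of_forall hpg)
    rwa [inv_inv] at h
  refine ⟨p, ?_, hpanti, hpS, ?_, ?_, ?_⟩
  · rw [contDiff_one_iff_deriv]
    refine ⟨fun ξ => (hpd ξ).differentiableAt, ?_⟩
    have : deriv p = F ∘ p := funext fun ξ => (hpd ξ).deriv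
    rw [this]
    exact hFcont.comp hpcont
  · intro ξ
    rw [(hpd ξ).deriv]
  · rw [tendsto_order]
    constructor
    · intro d hd
      by_cases hdS : u_plus < d
      · have hdS' : d ∈ S := ⟨hdS, hd⟩
        filter_upwards [eventually_lt_atBot (g d)] with η hη
        exact hB d hdS' η hη
      · push_neg at hdS
        filter_upwards with η
        exact lt_of_le_of_lt hdS (hpS η).1
    · intro d hd
      filter_upwards with η
      exact lt_of_lt_of_le (hpS η).2 hd.le
  · rw [tendsto_order]
    constructor
    · intro d hd
      filter_upwards with η
      exact lt_of_lt_of_le hd (hpS η).1.le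
    · intro d hd
      by_cases hdS : d < u_minus
      · have hdS' : d ∈ S := ⟨hd, hdS⟩
        filter_upwards [eventually_gt_atTop (g d)] with η hη
        exact hA d hdS' η hη
      · push_neg at hdS
        filter_upwards with η
        exact lt_of_lt_of_le (hpS η).2 hdS
end

section
/- (Scanning-to-acceleration shock profile; Theorem 4.3.) Let u₋ < u₊ be real numbers, let w : ℝ → ℝ be locally Lipschitz, set v₋ := w(u₋), v₊ := w(u₊), and s := −(v₊ − v₋)/(u₊ − u₋). Assume the chord condition: for every u ∈ (u₋, u₊), (v₊ − v₋)/(u₊ − u₋) > (w(u) − v₋)/(u − u₋). Then there exists a continuously differentiable, strictly increasing function u : ℝ → ℝ with values in (u₋, u₊), satisfying u′(ξ) = −s·(u(ξ) − u₋) − (w(u(ξ)) − v₋) for all ξ ∈ ℝ, with u(ξ) → u₋ as ξ → −∞ and u(ξ) → u₊ as ξ → +∞. (This establishes the existence of acceleration shocks, which are not allowed by the LWR model.) -/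
open Filter
open Set MeasureTheory intervalIntegral

lemma shock_loclip_bound (w : ℝ → ℝ) (hw : LocallyLipschitz w) (m p : ℝ) (F : ℝ → ℝ)
    (hrep : ∀ x, F x = m * (x - p) - (w x - w p)) :
    ∃ K > (0:ℝ), ∃ ε > (0:ℝ), ∀ t, |t - p| < ε → F t ≤ K * |t - p| := by
  obtain ⟨K, t, ht, hK⟩ := hw p
  obtain ⟨ε, hε, hball⟩ := Metric.mem_nhds_iff.1 ht
  refine ⟨|m| + K + 1, by positivity, ε, hε, fun x hx => ?_⟩
  have hx' : x ∈ Metric.ball p ε := by simpa [Metric.mem_ball, Real.dist_eq] using hx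
  have hp' : p ∈ Metric.ball p ε := Metric.mem_ball_self hε
  have hwb : |w x - w p| ≤ (K : ℝ) * |x - p| := by
    have := hK.dist_le_mul x (hball hx') p (hball hp')
    simpa [Real.dist_eq] using this
  calc F x = m * (x - p) - (w x - w p) := hrep x
    _ ≤ |m * (x - p) - (w x - w p)| := le_abs_self _
    _ ≤ |m * (x - p)| + |w x - w p| := abs_sub _ _
    _ ≤ |m| * |x - p| + (K : ℝ) * |x - p| := by rw [abs_mul]; linarith
    _ ≤ (|m| + (K : ℝ) + 1) * |x - p| := by nlinarith [abs_nonneg (x - p)]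

lemma shock_unbounded_aux (a b : ℝ) (F : ℝ → ℝ) (hFc : Continuous F)
    (hFpos : ∀ x ∈ Set.Ioo a b, 0 < F x) (c : ℝ) (hc : c ∈ Set.Ioo a b)
    (K : ℝ) (hK : 0 < K) (a₀ : ℝ) (ha₀ : a₀ ∈ Set.Ioo a b)
    (hbnd : ∀ t ∈ Set.Ico a₀ b, F t ≤ K * (b - t)) (M : ℝ) :
    ∃ x ∈ Set.Ioo a b, M < ∫ t in c..x, (F t)⁻¹ := by
  set g : ℝ → ℝ := fun t => (F t)⁻¹ with hgdef
  have hgc : ContinuousOn g (Set.Ioo a b) :=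
    (hFc.continuousOn).inv₀ fun x hx => (hFpos x hx).ne'
  have hint : ∀ x ∈ Set.Ioo a b, ∀ y ∈ Set.Ioo a b, IntervalIntegrable g volume x y :=
    fun x hx y hy =>
      (hgc.mono (Set.OrdConnected.uIcc_subset Set.ordConnected_Ioo hx hy)).intervalIntegrable
  have key : ∀ x ∈ Set.Ioo a₀ b,
      (∫ t in c..a₀, g t) + K⁻¹ * Real.log ((b - a₀) / (b - x)) ≤ ∫ t in c..x, g t := by
    intro x hx
    have hxIoo : x ∈ Set.Ioo a b := ⟨ha₀.1.trans hx.1, hx.2⟩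
    have h1 : IntervalIntegrable g volume c a₀ := hint c hc a₀ ha₀
    have h2 : IntervalIntegrable g volume a₀ x := hint a₀ ha₀ x hxIoo
    have hsplit : (∫ t in c..a₀, g t) + ∫ t in a₀..x, g t = ∫ t in c..x, g t :=
      integral_add_adjacent_intervals h1 h2
    have hcompint : IntervalIntegrable (fun t => (K * (b - t))⁻¹) volume a₀ x := by
      apply ContinuousOn.intervalIntegrable
      apply ContinuousOn.inv₀
      · exact (continuous_const.mul (continuous_const.sub continuous_id)).continuousOn
      · intro t ht
        rw [Set.uIcc_of_le hx.1.le] at ht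
        exact (mul_pos hK (sub_pos.2 (lt_of_le_of_lt ht.2 hx.2))).ne'
    have hmono : (∫ t in a₀..x, (K * (b - t))⁻¹) ≤ ∫ t in a₀..x, g t := by
      apply intervalIntegral.integral_mono_on hx.1.le hcompint h2
      intro t ht
      have htb : t ∈ Set.Ico a₀ b := ⟨ht.1, lt_of_le_of_lt ht.2 hx.2⟩
      have hFt : 0 < F t := hFpos t ⟨ha₀.1.trans_le ht.1, htb.2⟩
      exact inv_anti₀ hFt (hbnd t htb)
    have hcalc : (∫ t in a₀..x, (K * (b - t))⁻¹) = K⁻¹ * Real.log ((b - a₀) / (b - x)) := by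
      have h3 : ∀ t : ℝ, (K * (b - t))⁻¹ = K⁻¹ * (b - t)⁻¹ := fun t => by rw [mul_inv]
      simp_rw [h3]
      rw [intervalIntegral.integral_const_mul]
      congr 1
      rw [intervalIntegral.integral_comp_sub_left (fun s : ℝ => s⁻¹) b]
      apply integral_inv
      intro h0
      rcases Set.mem_uIcc.1 h0 with h | h
      · have := sub_pos.2 hx.2; linarith [h.1]
      · have := sub_pos.2 ha₀.2; linarith [h.1]
    linarith
  have htend : Tendsto (fun x => (∫ t in c..a₀, g t) + K⁻¹ * Real.log ((b - a₀) / (b - x)))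
      (nhdsWithin b (Set.Iio b)) atTop := by
    apply tendsto_atTop_add_const_left
    apply Tendsto.const_mul_atTop (inv_pos.2 hK)
    apply Real.tendsto_log_atTop.comp
    have h1 : Tendsto (fun x => b - x) (nhdsWithin b (Set.Iio b)) (nhdsWithin 0 (Set.Ioi 0)) := by
      apply tendsto_nhdsWithin_of_tendsto_nhds_of_eventually_within
      · have hcont : Continuous fun x : ℝ => b - x := continuous_const.sub continuous_id
        have h := hcont.tendsto b
        rw [sub_self] at h
        exact h.mono_left nhdsWithin_le_nhds
      · filter_upwards [self_mem_nhdsWithin] with x hx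
        exact sub_pos.2 (Set.mem_Iio.1 hx)
    have h2 : Tendsto (fun y : ℝ => (b - a₀) * y⁻¹) (nhdsWithin 0 (Set.Ioi 0)) atTop :=
      Tendsto.const_mul_atTop (sub_pos.2 ha₀.2) tendsto_inv_nhdsGT_zero
    have := h2.comp h1
    simpa [div_eq_mul_inv, Function.comp_def] using this
  have hev : ∀ᶠ x in nhdsWithin b (Set.Iio b), x ∈ Set.Ioo a₀ b :=
    Ioo_mem_nhdsLT_of_mem ⟨ha₀.2, le_refl b⟩
  obtain ⟨x, hxM, hxmem⟩ := ((htend.eventually (eventually_gt_atTop M)).and hev).exists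
  exact ⟨x, ⟨ha₀.1.trans hxmem.1, hxmem.2⟩, hxM.trans_le (key x hxmem)⟩

/-- Scanning-to-acceleration shock profile (Theorem 4.3): under the chord
condition, there is a strictly increasing viscous profile joining
`u_minus` (at `ξ = −∞`) to `u_plus` (at `ξ = +∞`) for the traveling-wave
equation `u' = −s(u − u_minus) − (w(u) − v_minus)` with Rankine–Hugoniot
speed `s = −(v_plus − v_minus)/(u_plus − u_minus)`. This establishes the
existence of acceleration shocks, which are not allowed by the LWR model. -/
theorem exists_scanning_to_acceleration_shock_profile
    (u_minus u_plus : ℝ) (hlt : u_minus < u_plus)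
    (w : ℝ → ℝ) (hw : LocallyLipschitz w)
    (v_minus v_plus s : ℝ)
    (hvm : v_minus = w u_minus) (hvp : v_plus = w u_plus)
    (hs : s = -((v_plus - v_minus) / (u_plus - u_minus)))
    (hchord : ∀ u ∈ Set.Ioo u_minus u_plus,
      (v_plus - v_minus) / (u_plus - u_minus) > (w u - v_minus) / (u - u_minus)) :
    ∃ u : ℝ → ℝ, ContDiff ℝ 1 u ∧ StrictMono u ∧
      (∀ ξ : ℝ, u ξ ∈ Set.Ioo u_minus u_plus) ∧
      (∀ ξ : ℝ, deriv u ξ = -s * (u ξ - u_minus) - (w (u ξ) - v_minus)) ∧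
      Tendsto u atBot (nhds u_minus) ∧
      Tendsto u atTop (nhds u_plus) := by
  have hne : u_plus - u_minus ≠ 0 := sub_ne_zero.2 hlt.ne'
  set m : ℝ := (v_plus - v_minus) / (u_plus - u_minus) with hm
  set F : ℝ → ℝ := fun x => m * (x - u_minus) - (w x - v_minus) with hFdef
  have hFc : Continuous F := by
    have := hw.continuous
    fun_prop
  have hFpos : ∀ x ∈ Set.Ioo u_minus u_plus, 0 < F x := by
    intro x hx
    have h1 := hchord x hx
    have h2 : x - u_minus > 0 := sub_pos.2 hx.1
    have h3 : (w x - v_minus) / (x - u_minus) * (x - u_minus) < m * (x - u_minus) :=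
      mul_lt_mul_of_pos_right h1 h2
    rw [div_mul_cancel₀ _ h2.ne'] at h3
    simpa [hFdef] using sub_pos.2 h3
  have hmmul : m * (u_plus - u_minus) = v_plus - v_minus := div_mul_cancel₀ _ hne
  -- representations near both endpoints
  have hrep_minus : ∀ x, F x = m * (x - u_minus) - (w x - w u_minus) := by
    intro x; simp only [hFdef, hvm]
  have hrep_plus : ∀ x, F x = m * (x - u_plus) - (w x - w u_plus) := by
    intro x
    show m * (x - u_minus) - (w x - v_minus) = m * (x - u_plus) - (w x - w u_plus)
    rw [← hvp]
    have h : m * (x - u_minus) - m * (x - u_plus) = v_plus - v_minus := by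
      rw [← hmmul]; ring
    linarith
  set c : ℝ := (u_minus + u_plus) / 2 with hcdef
  have hc : c ∈ Set.Ioo u_minus u_plus := ⟨by simp [hcdef]; linarith, by simp [hcdef]; linarith⟩
  set g : ℝ → ℝ := fun t => (F t)⁻¹ with hgdef
  set G : ℝ → ℝ := fun x => ∫ t in c..x, g t with hGdef
  have hgc : ContinuousOn g (Set.Ioo u_minus u_plus) :=
    (hFc.continuousOn).inv₀ fun x hx => (hFpos x hx).ne'
  have hint : ∀ x ∈ Set.Ioo u_minus u_plus, ∀ y ∈ Set.Ioo u_minus u_plus,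
      IntervalIntegrable g volume x y := fun x hx y hy =>
    (hgc.mono (Set.OrdConnected.uIcc_subset Set.ordConnected_Ioo hx hy)).intervalIntegrable
  have hGderiv : ∀ x ∈ Set.Ioo u_minus u_plus, HasDerivAt G (g x) x := by
    intro x hx
    exact intervalIntegral.integral_hasDerivAt_right (hint c hc x hx)
      (hgc.stronglyMeasurableAtFilter isOpen_Ioo x hx)
      ((hFc.continuousAt).inv₀ (hFpos x hx).ne')
  have hGcont : ContinuousOn G (Set.Ioo u_minus u_plus) :=
    fun x hx => (hGderiv x hx).continuousAt.continuousWithinAt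
  have hGmono : StrictMonoOn G (Set.Ioo u_minus u_plus) := by
    apply strictMonoOn_of_deriv_pos (convex_Ioo _ _) hGcont
    intro x hx
    rw [interior_Ioo] at hx
    rw [(hGderiv x hx).deriv]
    exact inv_pos.2 (hFpos x hx)
  -- unboundedness above
  have htop : ∀ M : ℝ, ∃ x ∈ Set.Ioo u_minus u_plus, M < G x := by
    intro M
    obtain ⟨K, hK, ε, hε, hb⟩ := shock_loclip_bound w hw m u_plus F hrep_plus
    set a₀ : ℝ := max c (u_plus - ε / 2) with ha₀def
    have ha₀ : a₀ ∈ Set.Ioo u_minus u_plus :=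
      ⟨lt_of_lt_of_le hc.1 (le_max_left _ _), max_lt hc.2 (by linarith)⟩
    have hbnd : ∀ t ∈ Set.Ico a₀ u_plus, F t ≤ K * (u_plus - t) := by
      intro t ht
      have h1 : u_plus - t ≤ ε / 2 := by
        have := le_max_right c (u_plus - ε / 2)
        have := ht.1
        simp only [ha₀def] at *
        linarith [le_max_right c (u_plus - ε / 2)]
      have habs : |t - u_plus| = u_plus - t := by
        rw [abs_sub_comm, abs_of_pos (sub_pos.2 ht.2)]
      have := hb t (by rw [habs]; linarith)
      rwa [habs] at this
    exact shock_unbounded_aux u_minus u_plus F hFc hFpos c hc K hK a₀ ha₀ hbnd M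
  -- unboundedness below, via reflection
  have hbot : ∀ M : ℝ, ∃ x ∈ Set.Ioo u_minus u_plus, G x < M := by
    intro M
    set S : ℝ := u_minus + u_plus with hSdef
    set Ft : ℝ → ℝ := fun x => F (S - x) with hFtdef
    have hFtc : Continuous Ft := hFc.comp (continuous_const.sub continuous_id)
    have href : ∀ x ∈ Set.Ioo u_minus u_plus, S - x ∈ Set.Ioo u_minus u_plus := by
      intro x hx
      exact ⟨by simp only [hSdef]; linarith [hx.2], by simp only [hSdef]; linarith [hx.1]⟩
    have hFtpos : ∀ x ∈ Set.Ioo u_minus u_plus, 0 < Ft x := fun x hx =>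
      hFpos _ (href x hx)
    obtain ⟨K, hK, ε, hε, hb⟩ := shock_loclip_bound w hw m u_minus F hrep_minus
    set a₀ : ℝ := max (S - c) (u_plus - ε / 2) with ha₀def
    have hScIoo : S - c ∈ Set.Ioo u_minus u_plus := href c hc
    have ha₀ : a₀ ∈ Set.Ioo u_minus u_plus :=
      ⟨lt_of_lt_of_le hScIoo.1 (le_max_left _ _), max_lt hScIoo.2 (by linarith)⟩
    have hbnd : ∀ t ∈ Set.Ico a₀ u_plus, Ft t ≤ K * (u_plus - t) := by
      intro t ht
      have h1 : u_plus - t ≤ ε / 2 := by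
        have h2 := ht.1
        simp only [ha₀def] at h2
        linarith [le_max_right (S - c) (u_plus - ε / 2), le_trans (le_max_right (S - c) (u_plus - ε / 2)) h2]
      have habs : |(S - t) - u_minus| = u_plus - t := by
        have : (S - t) - u_minus = u_plus - t := by simp only [hSdef]; ring
        rw [this, abs_of_pos (sub_pos.2 ht.2)]
      have := hb (S - t) (by rw [habs]; linarith)
      rwa [habs] at this
    obtain ⟨y, hy, hyM⟩ := shock_unbounded_aux u_minus u_plus Ft hFtc hFtpos (S - c) hScIoo
      K hK a₀ ha₀ hbnd (-M)
    refine ⟨S - y, href y hy, ?_⟩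
    have heqint : (∫ t in (S - c)..y, (Ft t)⁻¹) = -G (S - y) := by
      have h1 : (∫ t in (S - c)..y, (F (S - t))⁻¹)
          = ∫ t in (S - y)..(S - (S - c)), (F t)⁻¹ :=
        intervalIntegral.integral_comp_sub_left (fun t => (F t)⁻¹) S
      have h2 : S - (S - c) = c := by ring
      rw [hFtdef]
      simp only []
      rw [h1, h2, intervalIntegral.integral_symm]
    rw [heqint] at hyM
    simp only [hGdef] at *
    linarith
  -- surjectivity of G onto ℝ
  have hsurj : ∀ ξ : ℝ, ∃ x, x ∈ Set.Ioo u_minus u_plus ∧ G x = ξ := by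
    intro ξ
    obtain ⟨x₁, hx₁, hGx₁⟩ := hbot ξ
    obtain ⟨x₂, hx₂, hGx₂⟩ := htop ξ
    have hx₁₂ : x₁ < x₂ := by
      by_contra h
      push_neg at h
      have := hGmono.monotoneOn hx₂ hx₁ h
      linarith
    have hsub : Set.Icc x₁ x₂ ⊆ Set.Ioo u_minus u_plus :=
      Set.OrdConnected.out Set.ordConnected_Ioo hx₁ hx₂
    have := intermediate_value_Ioo hx₁₂.le (hGcont.mono hsub)
    obtain ⟨x, hx, hGx⟩ := this ⟨hGx₁, hGx₂⟩
    exact ⟨x, hsub ⟨hx.1.le, hx.2.le⟩, hGx⟩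
  choose u hmem huG using hsurj
  -- key comparison: for x in Ioo, ζ ≤/< relations
  have hlt_of_lt : ∀ (x : ℝ), x ∈ Set.Ioo u_minus u_plus → ∀ ζ : ℝ, ζ < G x → u ζ < x := by
    intro x hx ζ hζ
    by_contra h
    push_neg at h
    have := hGmono.monotoneOn hx (hmem ζ) h
    rw [huG ζ] at this
    linarith
  have hgt_of_gt : ∀ (x : ℝ), x ∈ Set.Ioo u_minus u_plus → ∀ ζ : ℝ, G x < ζ → x < u ζ := by
    intro x hx ζ hζ
    by_contra h
    push_neg at h
    have := hGmono.monotoneOn (hmem ζ) hx h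
    rw [huG ζ] at this
    linarith
  have humono : StrictMono u := by
    intro ξ₁ ξ₂ h
    have : ξ₁ < G (u ξ₂) := by rw [huG ξ₂]; exact h
    exact (hlt_of_lt (u ξ₂) (hmem ξ₂) ξ₁ this)
  have hucont : Continuous u := by
    rw [continuous_iff_continuousAt]
    intro ξ
    rw [ContinuousAt, tendsto_order]
    constructor
    · intro y hy
      have hmax : max y u_minus < u ξ := max_lt hy (hmem ξ).1
      obtain ⟨x', hx'1, hx'2⟩ := exists_between hmax
      have hx'Ioo : x' ∈ Set.Ioo u_minus u_plus :=
        ⟨lt_of_le_of_lt (le_max_right _ _) hx'1, hx'2.trans (hmem ξ).2⟩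
      have hGx' : G x' < ξ := by
        have := hGmono hx'Ioo (hmem ξ) hx'2
        rwa [huG ξ] at this
      filter_upwards [Ioi_mem_nhds hGx'] with ζ hζ
      exact lt_of_le_of_lt (le_max_left y u_minus)
        (hx'1.trans_le (hgt_of_gt x' hx'Ioo ζ hζ).le)
    · intro y hy
      have hmin : u ξ < min y u_plus := lt_min hy (hmem ξ).2
      obtain ⟨x', hx'1, hx'2⟩ := exists_between hmin
      have hx'Ioo : x' ∈ Set.Ioo u_minus u_plus :=
        ⟨(hmem ξ).1.trans hx'1, lt_of_lt_of_le hx'2 (min_le_right _ _)⟩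
      have hGx' : ξ < G x' := by
        have := hGmono (hmem ξ) hx'Ioo hx'1
        rwa [huG ξ] at this
      filter_upwards [Iio_mem_nhds hGx'] with ζ hζ
      exact lt_of_le_of_lt ((hlt_of_lt x' hx'Ioo ζ hζ).le)
        (lt_of_lt_of_le hx'2 (min_le_left _ _))
  have huderiv : ∀ ξ : ℝ, HasDerivAt u (F (u ξ)) ξ := by
    intro ξ
    have h1 : HasDerivAt G ((F (u ξ))⁻¹) (u ξ) := hGderiv _ (hmem ξ)
    have h2 := HasDerivAt.of_local_left_inverse (hucont.continuousAt) h1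
      (inv_ne_zero (hFpos _ (hmem ξ)).ne') (Eventually.of_forall huG)
    simpa [inv_inv] using h2
  refine ⟨u, ?_, humono, hmem, ?_, ?_, ?_⟩
  · rw [contDiff_one_iff_deriv]
    refine ⟨fun ξ => (huderiv ξ).differentiableAt, ?_⟩
    have : deriv u = fun ξ => F (u ξ) := funext fun ξ => (huderiv ξ).deriv
    rw [this]
    exact hFc.comp hucont
  · intro ξ
    rw [(huderiv ξ).deriv]
    have hms : -s = m := by rw [hs]; ring
    simp only [hFdef, ← hms]
  · rw [tendsto_order]
    constructor
    · intro y hy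
      exact Eventually.of_forall fun ξ => hy.trans (hmem ξ).1
    · intro y hy
      have hmin : u_minus < min y u_plus := lt_min hy hlt
      obtain ⟨x', hx'1, hx'2⟩ := exists_between hmin
      have hx'Ioo : x' ∈ Set.Ioo u_minus u_plus :=
        ⟨hx'1, lt_of_lt_of_le hx'2 (min_le_right _ _)⟩
      filter_upwards [Iio_mem_atBot (G x')] with ξ hξ
      exact lt_of_lt_of_le (hlt_of_lt x' hx'Ioo ξ hξ)
        (le_trans hx'2.le (min_le_left _ _))
  · rw [tendsto_order]
    constructor
    · intro y hy
      have hmax : max y u_minus < u_plus := max_lt hy hlt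
      obtain ⟨x', hx'1, hx'2⟩ := exists_between hmax
      have hx'Ioo : x' ∈ Set.Ioo u_minus u_plus :=
        ⟨lt_of_le_of_lt (le_max_right _ _) hx'1, hx'2⟩
      filter_upwards [Ioi_mem_atTop (G x')] with ξ hξ
      exact lt_of_le_of_lt (le_max_left y u_minus)
        (hx'1.trans_le (hgt_of_gt x' hx'Ioo ξ hξ).le)
    · intro y hy
      exact Eventually.of_forall fun ξ => (hmem ξ).2.trans hy
end

section
/- (Lemma 4.1(i), monotonicity of shock profiles.) Let w : ℝ → ℝ be locally Lipschitz, let u₋ ≠ u₊ be real numbers, set v₋ := w(u₋), v₊ := w(u₊) and s := −(v₊ − v₋)/(u₊ − u₋), and suppose u : ℝ → ℝ is a differentiable function satisfying u′(ξ) = −s·(u(ξ) − u₋) − (w(u(ξ)) − v₋) for all ξ ∈ ℝ, with u(ξ) → u₋ as ξ → −∞ and u(ξ) → u₊ as ξ → +∞. Then u′(ξ) ≠ 0 for every ξ ∈ ℝ, and consequently u is strictly monotone on ℝ. -/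
open Filter

/-- Lemma 4.1(i): the derivative of a viscous shock profile never vanishes,
so the profile is strictly monotone. -/
theorem shock_profile_deriv_ne_zero_and_strictMono
    (w : ℝ → ℝ) (hw : LocallyLipschitz w)
    (u_minus u_plus : ℝ) (hne : u_minus ≠ u_plus)
    (v_minus v_plus s : ℝ)
    (hvm : v_minus = w u_minus) (hvp : v_plus = w u_plus)
    (hs : s = -((v_plus - v_minus) / (u_plus - u_minus)))
    (u : ℝ → ℝ) (hdiff : Differentiable ℝ u)
    (hode : ∀ ξ : ℝ, deriv u ξ = -s * (u ξ - u_minus) - (w (u ξ) - v_minus))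
    (hbot : Tendsto u atBot (nhds u_minus))
    (htop : Tendsto u atTop (nhds u_plus)) :
    (∀ ξ : ℝ, deriv u ξ ≠ 0) ∧ (StrictMono u ∨ StrictAnti u) := by
  set F : ℝ → ℝ := fun x => -s * (x - u_minus) - (w x - v_minus) with hF
  have hFcont : Continuous F := by
    have hwc : Continuous w := hw.continuous
    fun_prop
  have hderiv : ∀ ξ, HasDerivAt u (F (u ξ)) ξ := by
    intro ξ
    have h := (hdiff ξ).hasDerivAt
    rwa [hode ξ] at h
  have key : ∀ ξ₀ : ℝ, deriv u ξ₀ ≠ 0 := by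
    intro ξ₀ h0
    set c := u ξ₀ with hc
    have hFc : F c = 0 := by
      have := hode ξ₀
      rw [h0] at this
      exact this.symm
    obtain ⟨K, t, ht, hK⟩ := hw c
    obtain ⟨r, hr, hball⟩ := Metric.mem_nhds_iff.mp ht
    have hKw : LipschitzOnWith K w (Metric.ball c r) := hK.mono hball
    have hKF : LipschitzOnWith (‖s‖₊ + K) F (Metric.ball c r) := by
      rw [lipschitzOnWith_iff_dist_le_mul]
      intro x hx y hy
      have hwxy := (lipschitzOnWith_iff_dist_le_mul.mp hKw) x hx y hy
      simp only [Real.dist_eq] at hwxy ⊢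
      have hdiffF : F x - F y = (-s) * (x - y) - (w x - w y) := by
        simp only [hF]; ring
      calc |F x - F y| = |(-s) * (x - y) - (w x - w y)| := by rw [hdiffF]
        _ ≤ |(-s) * (x - y)| + |w x - w y| := abs_sub _ _
        _ ≤ |s| * |x - y| + K * |x - y| := by
            rw [abs_mul, abs_neg]
            exact add_le_add le_rfl hwxy
        _ = ((‖s‖₊ + K : NNReal) : ℝ) * |x - y| := by
            push_cast
            rw [Real.norm_eq_abs]
            ring
    have hopen : IsOpen {ξ : ℝ | u ξ = c} := by
      rw [isOpen_iff_mem_nhds]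
      intro ξ₁ hξ₁
      have heq : u =ᶠ[nhds ξ₁] (fun _ => c) := by
        apply ODE_solution_unique_of_eventually (v := fun _ => F)
          (s := fun _ => Metric.ball c r) (K := ‖s‖₊ + K) (Filter.Eventually.of_forall fun _ => hKF)
        · have htend : Tendsto u (nhds ξ₁) (nhds c) := by
            have := hdiff.continuous.tendsto ξ₁
            rwa [hξ₁] at this
          have hmem : ∀ᶠ ξ in nhds ξ₁, u ξ ∈ Metric.ball c r :=
            htend (Metric.ball_mem_nhds c hr)
          filter_upwards [hmem] with ξ hm
          exact ⟨hderiv ξ, hm⟩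
        · filter_upwards with ξ
          refine ⟨?_, Metric.mem_ball_self hr⟩
          simpa [hFc] using hasDerivAt_const ξ c
        · exact hξ₁
      exact heq
    have hclosed : IsClosed {ξ : ℝ | u ξ = c} :=
      isClosed_eq hdiff.continuous continuous_const
    have huniv : {ξ : ℝ | u ξ = c} = Set.univ :=
      IsClopen.eq_univ ⟨hclosed, hopen⟩ ⟨ξ₀, rfl⟩
    have hconst : ∀ ξ, u ξ = c := fun ξ => by
      have : ξ ∈ {ξ : ℝ | u ξ = c} := huniv ▸ Set.mem_univ ξ
      exact this
    have h1 : Tendsto u atBot (nhds c) := by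
      simp only [funext hconst]; exact tendsto_const_nhds
    have h2 : Tendsto u atTop (nhds c) := by
      simp only [funext hconst]; exact tendsto_const_nhds
    have e1 : u_minus = c := tendsto_nhds_unique hbot h1
    have e2 : u_plus = c := tendsto_nhds_unique htop h2
    exact hne (e1.trans e2.symm)
  refine ⟨key, ?_⟩
  have hdc : Continuous (deriv u) := by
    have heq : deriv u = F ∘ u := funext fun ξ => hode ξ
    rw [heq]
    exact hFcont.comp hdiff.continuous
  rcases (key 0).lt_or_gt with hneg | hpos
  · right
    apply strictAnti_of_deriv_neg
    intro ξ
    by_contra hle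
    push_neg at hle
    have hlt : 0 < deriv u ξ := lt_of_le_of_ne hle (Ne.symm (key ξ))
    have : (0 : ℝ) ∈ Set.Icc (deriv u 0) (deriv u ξ) := ⟨hneg.le, hlt.le⟩
    obtain ⟨x, hx⟩ := intermediate_value_univ 0 ξ hdc this
    exact key x hx
  · left
    apply strictMono_of_deriv_pos
    intro ξ
    by_contra hle
    push_neg at hle
    have hlt : deriv u ξ < 0 := lt_of_le_of_ne hle (key ξ)
    have : (0 : ℝ) ∈ Set.Icc (deriv u ξ) (deriv u 0) := ⟨hlt.le, hpos.le⟩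
    obtain ⟨x, hx⟩ := intermediate_value_univ ξ 0 hdc this
    exact key x hx
end

section
/- (Lemma 4.3, deceleration shock profile.) Let u₊ < u₋ and let v : ℝ → ℝ be continuously differentiable, strictly increasing, and strictly concave on [u₊, u₋]. Set v₋ := v(u₋), v₊ := v(u₊), and s := −(v₊ − v₋)/(u₊ − u₋). Then there exists a continuously differentiable, strictly decreasing function u : ℝ → ℝ with values in (u₊, u₋), satisfying u′(ξ) = −s·(u(ξ) − u₋) − (v(u(ξ)) − v₋) for all ξ ∈ ℝ, with u(ξ) → u₋ as ξ → −∞ and u(ξ) → u₊ as ξ → +∞. (Hence any two states on the strictly concave, strictly increasing deceleration curve v = v^D(u) with u₋ > u₊ are connected by a shock wave with a viscous profile; no such connection exists when u₋ < u₊.) -/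
open Filter

set_option maxHeartbeats 2000000 in
/-- Lemma 4.3: deceleration shock profile. For a continuously differentiable,
strictly increasing, strictly concave flux `v` on `[u_plus, u_minus]` with
`u_plus < u_minus`, there is a strictly decreasing viscous profile joining
`u_minus` (at `ξ = −∞`) to `u_plus` (at `ξ = +∞`) for the traveling-wave
equation `u' = −s(u − u_minus) − (v(u) − v_minus)`, where
`s = −(v_plus − v_minus)/(u_plus − u_minus)` is the Rankine–Hugoniot speed. -/
theorem exists_deceleration_shock_profile
    (u_plus u_minus : ℝ) (hlt : u_plus < u_minus)
    (v : ℝ → ℝ)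
    (hC1 : ContDiffOn ℝ 1 v (Set.Icc u_plus u_minus))
    (hmono : StrictMonoOn v (Set.Icc u_plus u_minus))
    (hconc : StrictConcaveOn ℝ (Set.Icc u_plus u_minus) v)
    (v_minus v_plus s : ℝ)
    (hvm : v_minus = v u_minus) (hvp : v_plus = v u_plus)
    (hs : s = -((v_plus - v_minus) / (u_plus - u_minus))) :
    ∃ u : ℝ → ℝ, ContDiff ℝ 1 u ∧ StrictAnti u ∧
      (∀ ξ : ℝ, u ξ ∈ Set.Ioo u_plus u_minus) ∧
      (∀ ξ : ℝ, deriv u ξ = -s * (u ξ - u_minus) - (v (u ξ) - v_minus)) ∧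
      Tendsto u atBot (nhds u_minus) ∧
      Tendsto u atTop (nhds u_plus) := by
  subst hvm hvp
  have hne : u_plus - u_minus ≠ 0 := sub_ne_zero.mpr (ne_of_lt hlt)
  set J : Set ℝ := Set.Ioo u_plus u_minus with hJdef
  set f : ℝ → ℝ := fun w => -s * (w - u_minus) - (v w - v u_minus) with hfdef
  -- f vanishes at both endpoints
  have hfa : f u_plus = 0 := by
    simp only [hfdef, hs]
    field_simp
    ring
  have hfb : f u_minus = 0 := by simp [hfdef]
  -- f is negative on the open interval (strict concavity: graph above chord)
  have hfneg : ∀ w ∈ J, f w < 0 := by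
    intro w hw
    obtain ⟨hw1, hw2⟩ := hw
    set t : ℝ := (u_minus - w) / (u_minus - u_plus) with htdef
    have hba : (0:ℝ) < u_minus - u_plus := by linarith
    have ht0 : 0 < t := div_pos (by linarith) hba
    have ht1 : t < 1 := (div_lt_one hba).mpr (by linarith)
    have h6 : t * (u_minus - u_plus) = u_minus - w := by
      rw [htdef]; field_simp
    have hcomb : t * u_plus + (1 - t) * u_minus = w := by linear_combination -h6
    have hconc2 := hconc.2
    have hcc := hconc2 (Set.left_mem_Icc.mpr hlt.le) (Set.right_mem_Icc.mpr hlt.le)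
      (ne_of_lt hlt) (a := t) (b := 1 - t) ht0 (by linarith) (by ring)
    simp only [smul_eq_mul, hcomb] at hcc
    have hkey : -s * (w - u_minus) = t * (v u_plus - v u_minus) := by
      rw [hs]
      field_simp
      linear_combination (v u_plus - v u_minus) * h6
    simp only [hfdef]
    rw [hkey]
    nlinarith [hcc]
  -- f is C¹ on the closed interval
  have hfC : ContDiffOn ℝ 1 f (Set.Icc u_plus u_minus) := by
    have h1 : ContDiff ℝ 1 (fun w : ℝ => -s * (w - u_minus)) := by
      exact contDiff_const.mul (contDiff_id.sub contDiff_const)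
    exact h1.contDiffOn.sub (hC1.sub contDiffOn_const)
  have hfcont : ContinuousOn f (Set.Icc u_plus u_minus) := hfC.continuousOn
  -- Lipschitz bound for f on the interval
  obtain ⟨C, hC⟩ := isCompact_Icc.exists_bound_of_continuousOn
    (hfC.continuousOn_derivWithin (uniqueDiffOn_Icc hlt) le_rfl)
  set Kr : ℝ := max C 0 + 1 with hKrdef
  have hKrpos : 0 < Kr := by
    have := le_max_right C 0; simp only [hKrdef]; linarith
  have hlip : LipschitzOnWith (Real.toNNReal Kr) f (Set.Icc u_plus u_minus) := by
    apply (convex_Icc _ _).lipschitzOnWith_of_nnnorm_derivWithin_le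
      (hfC.differentiableOn one_ne_zero)
    intro x hx
    have h1 : ‖derivWithin f (Set.Icc u_plus u_minus) x‖ ≤ Kr := by
      have := hC x hx
      have h2 := le_max_left C 0
      simp only [hKrdef]; linarith
    calc ‖derivWithin f (Set.Icc u_plus u_minus) x‖₊
        = Real.toNNReal ‖derivWithin f (Set.Icc u_plus u_minus) x‖ := by
          rw [← coe_nnnorm, Real.toNNReal_coe]
      _ ≤ Real.toNNReal Kr := Real.toNNReal_mono h1
  have hKcoe : (Real.toNNReal Kr : ℝ) = Kr := Real.coe_toNNReal _ hKrpos.le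
  have hbd1 : ∀ w ∈ Set.Icc u_plus u_minus, -f w ≤ Kr * (w - u_plus) := by
    intro w hw
    have h := hlip.dist_le_mul w hw u_plus (Set.left_mem_Icc.mpr hlt.le)
    rw [Real.dist_eq, Real.dist_eq, hfa, sub_zero, hKcoe] at h
    have h3 : |w - u_plus| = w - u_plus := abs_of_nonneg (by linarith [hw.1])
    rw [h3] at h
    calc -f w ≤ |f w| := neg_le_abs _
      _ ≤ Kr * (w - u_plus) := h
  have hbd2 : ∀ w ∈ Set.Icc u_plus u_minus, -f w ≤ Kr * (u_minus - w) := by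
    intro w hw
    have h := hlip.dist_le_mul w hw u_minus (Set.right_mem_Icc.mpr hlt.le)
    rw [Real.dist_eq, Real.dist_eq, hfb, sub_zero, hKcoe] at h
    have h3 : |w - u_minus| = u_minus - w := by
      rw [abs_of_nonpos (by linarith [hw.2] : w - u_minus ≤ 0)]; ring
    rw [h3] at h
    calc -f w ≤ |f w| := neg_le_abs _
      _ ≤ Kr * (u_minus - w) := h
  clear_value Kr
  -- the midpoint
  set m : ℝ := (u_plus + u_minus) / 2 with hmdef
  have hmJ : m ∈ J := ⟨by simp only [hmdef]; linarith, by simp only [hmdef]; linarith⟩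
  clear_value m
  -- the integrand g = 1/f and the "time" function F
  set g : ℝ → ℝ := fun w => (f w)⁻¹ with hgdef
  have hgcont : ContinuousOn g J := by
    exact (hfcont.mono Set.Ioo_subset_Icc_self).inv₀ fun w hw => ne_of_lt (hfneg w hw)
  have hgneg : ∀ w ∈ J, g w < 0 := fun w hw => inv_lt_zero.mpr (hfneg w hw)
  set F : ℝ → ℝ := fun w => ∫ t in m..w, g t with hFdef
  have hFderiv : ∀ w ∈ J, HasDerivAt F (g w) w := by
    intro w hw
    have hsub : Set.uIcc m w ⊆ J := (Set.ordConnected_Ioo).uIcc_subset hmJ hw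
    have hint : IntervalIntegrable g MeasureTheory.volume m w :=
      (hgcont.mono hsub).intervalIntegrable
    exact intervalIntegral.integral_hasDerivAt_right hint
      ((hgcont.stronglyMeasurableAtFilter isOpen_Ioo) w hw)
      (hgcont.continuousAt (isOpen_Ioo.mem_nhds hw))
  have hFcont : ContinuousOn F J := fun w hw =>
    (hFderiv w hw).continuousAt.continuousWithinAt
  have hFanti : StrictAntiOn F J := by
    apply strictAntiOn_of_deriv_neg (convex_Ioo _ _) hFcont
    intro w hw
    rw [interior_Ioo] at hw
    rw [(hFderiv w hw).deriv]
    exact hgneg w hw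
  -- lower bound for F near u_plus
  have key1 : ∀ w ∈ Set.Ioo u_plus m,
      Kr⁻¹ * Real.log ((m - u_plus) / (w - u_plus)) ≤ F w := by
    intro w hw
    have hwm : w ≤ m := hw.2.le
    have hIccJ : Set.Icc w m ⊆ J := fun t ht =>
      ⟨lt_of_lt_of_le hw.1 ht.1, lt_of_le_of_lt ht.2 hmJ.2⟩
    have hgint : IntervalIntegrable g MeasureTheory.volume w m :=
      ((hgcont.mono hIccJ).intervalIntegrable_of_Icc hwm)
    have hφcont : ContinuousOn (fun t => -(Kr * (t - u_plus))⁻¹) (Set.Icc w m) := by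
      apply ContinuousOn.neg
      apply ContinuousOn.inv₀ (by fun_prop)
      intro t ht
      have h5 : 0 < t - u_plus := by
        have := lt_of_lt_of_le hw.1 ht.1; linarith
      exact ne_of_gt (mul_pos hKrpos h5)
    have hφint : IntervalIntegrable (fun t => -(Kr * (t - u_plus))⁻¹)
        MeasureTheory.volume w m := hφcont.intervalIntegrable_of_Icc hwm
    have hle : ∀ t ∈ Set.Icc w m, g t ≤ -(Kr * (t - u_plus))⁻¹ := by
      intro t ht
      have htJ : t ∈ J := hIccJ ht
      have hft : f t < 0 := hfneg t htJ
      have hc : 0 < Kr * (t - u_plus) := by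
        have h5 : 0 < t - u_plus := by have := htJ.1; linarith
        exact mul_pos hKrpos h5
      have hfc : -f t ≤ Kr * (t - u_plus) := hbd1 t (Set.Ioo_subset_Icc_self htJ)
      have h4 : (Kr * (t - u_plus))⁻¹ ≤ (-f t)⁻¹ :=
        inv_anti₀ (by linarith) hfc
      rw [inv_neg] at h4
      simp only [hgdef]
      linarith
    have hmono2 := intervalIntegral.integral_mono_on hwm hgint hφint hle
    have hcalc : (∫ t in w..m, -(Kr * (t - u_plus))⁻¹)
        = -(Kr⁻¹ * Real.log ((m - u_plus) / (w - u_plus))) := by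
      rw [intervalIntegral.integral_neg]
      congr 1
      have heq : ∀ t : ℝ, (Kr * (t - u_plus))⁻¹ = Kr⁻¹ * (t - u_plus)⁻¹ := fun t => by
        rw [mul_inv]
      simp_rw [heq]
      rw [intervalIntegral.integral_const_mul]
      congr 1
      rw [intervalIntegral.integral_comp_sub_right (fun x => x⁻¹) u_plus,
        integral_inv_of_pos (by linarith [hw.1]) (by linarith [hmJ.1])]
    have hF : F w = -∫ t in w..m, g t := by
      simp only [hFdef]
      rw [intervalIntegral.integral_symm]
    rw [hF]
    rw [hcalc] at hmono2
    linarith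
  -- upper bound for F near u_minus
  have key2 : ∀ w ∈ Set.Ioo m u_minus,
      F w ≤ -(Kr⁻¹ * Real.log ((u_minus - m) / (u_minus - w))) := by
    intro w hw
    have hwm : m ≤ w := hw.1.le
    have hIccJ : Set.Icc m w ⊆ J := fun t ht =>
      ⟨lt_of_lt_of_le hmJ.1 ht.1, lt_of_le_of_lt ht.2 hw.2⟩
    have hgint : IntervalIntegrable g MeasureTheory.volume m w :=
      ((hgcont.mono hIccJ).intervalIntegrable_of_Icc hwm)
    have hφcont : ContinuousOn (fun t => -(Kr * (u_minus - t))⁻¹) (Set.Icc m w) := by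
      apply ContinuousOn.neg
      apply ContinuousOn.inv₀ (by fun_prop)
      intro t ht
      have h5 : 0 < u_minus - t := by
        have := lt_of_le_of_lt ht.2 hw.2; linarith
      exact ne_of_gt (mul_pos hKrpos h5)
    have hφint : IntervalIntegrable (fun t => -(Kr * (u_minus - t))⁻¹)
        MeasureTheory.volume m w := hφcont.intervalIntegrable_of_Icc hwm
    have hle : ∀ t ∈ Set.Icc m w, g t ≤ -(Kr * (u_minus - t))⁻¹ := by
      intro t ht
      have htJ : t ∈ J := hIccJ ht
      have hft : f t < 0 := hfneg t htJ
      have hc : 0 < Kr * (u_minus - t) := by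
        have h5 : 0 < u_minus - t := by have := htJ.2; linarith
        exact mul_pos hKrpos h5
      have hfc : -f t ≤ Kr * (u_minus - t) := hbd2 t (Set.Ioo_subset_Icc_self htJ)
      have h4 : (Kr * (u_minus - t))⁻¹ ≤ (-f t)⁻¹ :=
        inv_anti₀ (by linarith) hfc
      rw [inv_neg] at h4
      simp only [hgdef]
      linarith
    have hmono2 := intervalIntegral.integral_mono_on hwm hgint hφint hle
    have hcalc : (∫ t in m..w, -(Kr * (u_minus - t))⁻¹)
        = -(Kr⁻¹ * Real.log ((u_minus - m) / (u_minus - w))) := by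
      rw [intervalIntegral.integral_neg]
      congr 1
      have heq : ∀ t : ℝ, (Kr * (u_minus - t))⁻¹ = Kr⁻¹ * (u_minus - t)⁻¹ := fun t => by
        rw [mul_inv]
      simp_rw [heq]
      rw [intervalIntegral.integral_const_mul]
      congr 1
      rw [intervalIntegral.integral_comp_sub_left (fun x => x⁻¹) u_minus,
        integral_inv_of_pos (by linarith [hw.2]) (by linarith [hmJ.2])]
    calc F w ≤ ∫ t in m..w, -(Kr * (u_minus - t))⁻¹ := hmono2
      _ = _ := hcalc
  -- F blows up at the endpoints
  have htop : Tendsto F (nhdsWithin u_plus (Set.Ioi u_plus)) atTop := by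
    apply tendsto_atTop_mono' _ _
      (show Tendsto (fun w => Kr⁻¹ * Real.log ((m - u_plus) / (w - u_plus)))
        (nhdsWithin u_plus (Set.Ioi u_plus)) atTop from ?_)
    · filter_upwards [Ioo_mem_nhdsGT_of_mem (Set.mem_Ico.mpr ⟨le_rfl, hmJ.1⟩)] with w hw
      exact key1 w hw
    · apply Tendsto.const_mul_atTop (inv_pos.mpr hKrpos)
      apply Real.tendsto_log_atTop.comp
      have h1 : Tendsto (fun w : ℝ => w - u_plus)
          (nhdsWithin u_plus (Set.Ioi u_plus)) (nhdsWithin 0 (Set.Ioi 0)) := by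
        apply tendsto_nhdsWithin_of_tendsto_nhds_of_eventually_within
        · have h0 : Tendsto (fun w : ℝ => w - u_plus) (nhds u_plus) (nhds 0) := by
            simpa using (continuous_sub_right u_plus).tendsto u_plus
          exact h0.mono_left nhdsWithin_le_nhds
        · filter_upwards [self_mem_nhdsWithin] with w hw
          simp only [Set.mem_Ioi] at hw ⊢
          linarith
      have h2 : Tendsto (fun x : ℝ => (m - u_plus) * x⁻¹) (nhdsWithin 0 (Set.Ioi 0)) atTop := by
        apply Tendsto.const_mul_atTop (by linarith [hmJ.1]) tendsto_inv_nhdsGT_zero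
      exact (h2.comp h1).congr fun w => (div_eq_mul_inv _ _).symm
  have hbot : Tendsto F (nhdsWithin u_minus (Set.Iio u_minus)) atBot := by
    apply tendsto_atBot_mono' _ _
      (show Tendsto (fun w => -(Kr⁻¹ * Real.log ((u_minus - m) / (u_minus - w))))
        (nhdsWithin u_minus (Set.Iio u_minus)) atBot from ?_)
    · filter_upwards [Ioo_mem_nhdsLT_of_mem (Set.mem_Ioc.mpr ⟨hmJ.2, le_rfl⟩)] with w hw
      exact key2 w hw
    · rw [tendsto_neg_atBot_iff]
      apply Tendsto.const_mul_atTop (inv_pos.mpr hKrpos)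
      apply Real.tendsto_log_atTop.comp
      have h1 : Tendsto (fun w : ℝ => u_minus - w)
          (nhdsWithin u_minus (Set.Iio u_minus)) (nhdsWithin 0 (Set.Ioi 0)) := by
        apply tendsto_nhdsWithin_of_tendsto_nhds_of_eventually_within
        · have h0 : Tendsto (fun w : ℝ => u_minus - w) (nhds u_minus) (nhds 0) := by
            simpa using (continuous_sub_left u_minus).tendsto u_minus
          exact h0.mono_left nhdsWithin_le_nhds
        · filter_upwards [self_mem_nhdsWithin] with w hw
          simp only [Set.mem_Iio] at hw
          simp only [Set.mem_Ioi]
          linarith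
      have h2 : Tendsto (fun x : ℝ => (u_minus - m) * x⁻¹)
          (nhdsWithin 0 (Set.Ioi 0)) atTop := by
        apply Tendsto.const_mul_atTop (by linarith [hmJ.2]) tendsto_inv_nhdsGT_zero
      exact (h2.comp h1).congr fun w => (div_eq_mul_inv _ _).symm
  -- F is surjective onto ℝ
  have hsurj : ∀ ξ : ℝ, ∃ w, w ∈ J ∧ F w = ξ := by
    intro ξ
    obtain ⟨w1, hw1⟩ : ∃ w1, w1 ∈ J ∧ ξ < F w1 := by
      have h1 := htop.eventually_gt_atTop ξ
      have h2 : ∀ᶠ w in nhdsWithin u_plus (Set.Ioi u_plus), w ∈ J :=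
        Ioo_mem_nhdsGT_of_mem (Set.mem_Ico.mpr ⟨le_rfl, hlt⟩)
      obtain ⟨w, hwa, hwb⟩ := (h2.and h1).exists
      exact ⟨w, hwa, hwb⟩
    obtain ⟨w2, hw2⟩ : ∃ w2, w2 ∈ J ∧ F w2 < ξ := by
      have h1 := hbot.eventually_lt_atBot ξ
      have h2 : ∀ᶠ w in nhdsWithin u_minus (Set.Iio u_minus), w ∈ J :=
        Ioo_mem_nhdsLT_of_mem (Set.mem_Ioc.mpr ⟨hlt, le_rfl⟩)
      obtain ⟨w, hwa, hwb⟩ := (h2.and h1).exists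
      exact ⟨w, hwa, hwb⟩
    have hw12 : w1 < w2 := by
      rcases lt_trichotomy w1 w2 with h | h | h
      · exact h
      · exfalso; rw [h] at hw1; linarith [hw1.2, hw2.2]
      · exfalso
        have := hFanti hw2.1 hw1.1 h
        linarith [hw1.2, hw2.2]
    have hIccJ : Set.Icc w1 w2 ⊆ J := fun t ht =>
      ⟨lt_of_lt_of_le hw1.1.1 ht.1, lt_of_le_of_lt ht.2 hw2.1.2⟩
    have hIVT := intermediate_value_Icc' hw12.le (hFcont.mono hIccJ)
    have hmem : ξ ∈ Set.Icc (F w2) (F w1) := ⟨hw2.2.le, hw1.2.le⟩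
    obtain ⟨w, hwIcc, hFw⟩ := hIVT hmem
    exact ⟨w, hIccJ hwIcc, hFw⟩
  choose u huJ huF using hsurj
  -- comparison lemmas for the inverse
  have hcmp_lt : ∀ w ∈ J, ∀ ξ : ℝ, ξ < F w → w < u ξ := by
    intro w hw ξ hξ
    rcases lt_trichotomy w (u ξ) with h | h | h
    · exact h
    · exfalso; rw [h, huF] at hξ; exact lt_irrefl _ hξ
    · exfalso
      have := hFanti (huJ ξ) hw h
      rw [huF] at this
      linarith
  have hcmp_gt : ∀ w ∈ J, ∀ ξ : ℝ, F w < ξ → u ξ < w := by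
    intro w hw ξ hξ
    rcases lt_trichotomy (u ξ) w with h | h | h
    · exact h
    · exfalso; rw [← h, huF] at hξ; exact lt_irrefl _ hξ
    · exfalso
      have := hFanti hw (huJ ξ) h
      rw [huF] at this
      linarith
  have huanti : StrictAnti u := by
    intro ξ1 ξ2 h
    apply hcmp_gt (u ξ1) (huJ ξ1) ξ2
    rw [huF]
    exact h
  -- continuity of u
  have hucont : Continuous u := by
    rw [continuous_iff_continuousAt]
    intro ξ0
    rw [ContinuousAt, tendsto_order]
    constructor
    · intro w' hw'
      have hmax : max w' u_plus < u ξ0 := max_lt hw' (huJ ξ0).1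
      obtain ⟨w1, hw1a, hw1b⟩ := exists_between hmax
      have hw1J : w1 ∈ J := ⟨lt_of_le_of_lt (le_max_right _ _) hw1a,
        lt_trans hw1b (huJ ξ0).2⟩
      have hF1 : ξ0 < F w1 := by
        have := hFanti hw1J (huJ ξ0) hw1b
        rwa [huF] at this
      filter_upwards [eventually_lt_nhds hF1] with ξ hξ
      have := hcmp_lt w1 hw1J ξ hξ
      have h2 : w' ≤ max w' u_plus := le_max_left _ _
      linarith
    · intro w' hw'
      have hmin : u ξ0 < min w' u_minus := lt_min hw' (huJ ξ0).2
      obtain ⟨w1, hw1a, hw1b⟩ := exists_between hmin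
      have hw1J : w1 ∈ J := ⟨lt_trans (huJ ξ0).1 hw1a,
        lt_of_lt_of_le hw1b (min_le_right _ _)⟩
      have hF1 : F w1 < ξ0 := by
        have := hFanti (huJ ξ0) hw1J hw1a
        rwa [huF] at this
      filter_upwards [eventually_gt_nhds hF1] with ξ hξ
      have := hcmp_gt w1 hw1J ξ hξ
      have h2 : min w' u_minus ≤ w' := min_le_left _ _
      linarith
  -- derivative of u
  have hud : ∀ ξ : ℝ, HasDerivAt u (f (u ξ)) ξ := by
    intro ξ
    have h := HasDerivAt.of_local_left_inverse hucont.continuousAt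
      (hFderiv _ (huJ ξ)) (ne_of_lt (hgneg _ (huJ ξ)))
      (Filter.Eventually.of_forall huF)
    simpa only [hgdef, inv_inv] using h
  refine ⟨u, ?_, huanti, huJ, ?_, ?_, ?_⟩
  · rw [contDiff_one_iff_deriv]
    refine ⟨fun ξ => (hud ξ).differentiableAt, ?_⟩
    have hde : deriv u = fun ξ => f (u ξ) := funext fun ξ => (hud ξ).deriv
    rw [hde, continuous_iff_continuousAt]
    intro ξ
    exact (hfcont.continuousAt (Icc_mem_nhds (huJ ξ).1 (huJ ξ).2)).comp
      hucont.continuousAt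
  · intro ξ
    rw [(hud ξ).deriv, hfdef]
  · rw [tendsto_order]
    constructor
    · intro w' hw'
      have hmax : max w' u_plus < u_minus := max_lt hw' hlt
      obtain ⟨w1, hw1a, hw1b⟩ := exists_between hmax
      have hw1J : w1 ∈ J := ⟨lt_of_le_of_lt (le_max_right _ _) hw1a, hw1b⟩
      filter_upwards [eventually_lt_atBot (F w1)] with ξ hξ
      have := hcmp_lt w1 hw1J ξ hξ
      have h2 : w' ≤ max w' u_plus := le_max_left _ _
      linarith
    · intro w' hw'
      filter_upwards with ξ
      exact lt_trans (huJ ξ).2 hw'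
  · rw [tendsto_order]
    constructor
    · intro w' hw'
      filter_upwards with ξ
      exact lt_trans hw' (huJ ξ).1
    · intro w' hw'
      have hmin : u_plus < min w' u_minus := lt_min hw' hlt
      obtain ⟨w1, hw1a, hw1b⟩ := exists_between hmin
      have hw1J : w1 ∈ J := ⟨hw1a, lt_of_lt_of_le hw1b (min_le_right _ _)⟩
      filter_upwards [eventually_gt_atTop (F w1)] with ξ hξ
      have := hcmp_gt w1 hw1J ξ hξ
      have h2 : min w' u_minus ≤ w' := min_le_left _ _
      linarith
end
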